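/- arXiv:1102.2077 — 3 statements merged into one kernel-verified Lean document; each statement's English description precedes it below -/
import Mathlib

section
/- Let G be a real n×n matrix and v ∈ ℝⁿ such that det(1 + G·diag(v)) ≠ 0. Then ∑_{k=1}^n ∑_{ℓ=1}^n v_k · ((1 + G·diag(v))^{-1})_{k,ℓ} = (∑_{I⊆{1,…,n}} c_I v_I) / (∑_{I⊆{1,…,n}} g_I v_I). -/
open Matrix

/-- `g_I = det (G_I)`, the determinant of the submatrix of `G` indexed by `I × I`
(with `g_∅ = 1`). -/
noncomputable def gI {n : ℕ} (G : Matrix (Fin n) (Fin n) ℝ) (I : Finset (Fin n)) : ℝ :=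
  (G.submatrix (Subtype.val : {x // x ∈ I} → Fin n)
    (Subtype.val : {x // x ∈ I} → Fin n)).det

/-- The cofactor matrix of a square matrix: the transpose of its adjugate. -/
noncomputable def cofactor {m : Type*} [Fintype m] [DecidableEq m]
    (M : Matrix m m ℝ) : Matrix m m ℝ :=
  (Matrix.adjugate M)ᵀ

/-- `c_I`, the sum of all entries of the cofactor matrix of `G_I` (with `c_∅ = 0`). -/
noncomputable def cI {n : ℕ} (G : Matrix (Fin n) (Fin n) ℝ) (I : Finset (Fin n)) : ℝ :=
  ∑ k : {x // x ∈ I}, ∑ l : {x // x ∈ I},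
    cofactor (G.submatrix (Subtype.val : {x // x ∈ I} → Fin n)
      (Subtype.val : {x // x ∈ I} → Fin n)) k l

lemma det_piecewise_one {m : Type*} [Fintype m] [DecidableEq m]
    (M : Matrix m m ℝ) (S : Finset m) :
    Matrix.det (Matrix.of (S.piecewise (fun i => M i) (fun i => (1 : Matrix m m ℝ) i))) =
      (M.submatrix (Subtype.val : {x // x ∈ S} → m) Subtype.val).det := by
  classical
  let e : {x // x ∈ S} ⊕ {x // x ∉ S} ≃ m := Equiv.sumCompl (· ∈ S)
  rw [← Matrix.det_submatrix_equiv_self e]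
  have h : (Matrix.of (S.piecewise (fun i => M i) (fun i => (1 : Matrix m m ℝ) i))).submatrix e e
      = Matrix.fromBlocks (M.submatrix Subtype.val Subtype.val)
          (M.submatrix Subtype.val Subtype.val) 0 1 := by
    ext i j
    cases i with
    | inl i =>
      cases j with
      | inl j =>
        simp [e, Finset.piecewise_eq_of_mem _ _ _ i.2]
      | inr j =>
        simp [e, Finset.piecewise_eq_of_mem _ _ _ i.2]
    | inr i =>
      cases j with
      | inl j =>
        have hne : (i : m) ≠ (j : m) := fun h => i.2 (h ▸ j.2)
        simp [e, Finset.piecewise_eq_of_notMem _ _ _ i.2, Matrix.one_apply_ne hne]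
      | inr j =>
        simp [e, Finset.piecewise_eq_of_notMem _ _ _ i.2, Matrix.one_apply,
          Subtype.ext_iff]
  rw [h, Matrix.det_fromBlocks_zero₂₁, Matrix.det_one, mul_one]

lemma det_one_add_expand {m : Type*} [Fintype m] [DecidableEq m] (M : Matrix m m ℝ) :
    (1 + M).det = ∑ S : Finset m,
      (M.submatrix (Subtype.val : {x // x ∈ S} → m) Subtype.val).det := by
  classical
  have h1 : (1 + M) = Matrix.of ((fun i => M i) + (fun i => (1 : Matrix m m ℝ) i)) := by
    ext i j
    simp [Matrix.add_apply, add_comm]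
  have h2 : (Matrix.of ((fun i => M i) + (fun i => (1 : Matrix m m ℝ) i))).det
      = Matrix.detRowAlternating ((fun i => M i) + (fun i => (1 : Matrix m m ℝ) i)) := rfl
  rw [h1, h2]
  have h3 : Matrix.detRowAlternating ((fun i => M i) + (fun i => (1 : Matrix m m ℝ) i))
      = ∑ S : Finset m, Matrix.detRowAlternating
          (S.piecewise (fun i => M i) (fun i => (1 : Matrix m m ℝ) i)) :=
    MultilinearMap.map_add_univ (Matrix.detRowAlternating).toMultilinearMap _ _
  rw [h3]
  exact Finset.sum_congr rfl fun S _ => det_piecewise_one M S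

lemma det_add_const_rows {m : Type*} [Fintype m] [DecidableEq m]
    (M : Matrix m m ℝ) (b : m → ℝ) :
    (M + Matrix.of (fun _ => b)).det = M.det + ∑ k, ∑ l, b l * M.adjugate l k := by
  classical
  have h1 : (M + Matrix.of (fun _ => b))
      = Matrix.of ((fun _ => b) + (fun i => M i)) := by
    ext i j
    simp [Matrix.add_apply, add_comm]
  have h2 : (M + Matrix.of (fun _ => b)).det
      = ∑ S : Finset m, Matrix.detRowAlternating
          (S.piecewise (fun _ => b) (fun i => M i)) := by
    rw [h1]
    exact MultilinearMap.map_add_univ (Matrix.detRowAlternating).toMultilinearMap _ _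
  rw [h2]
  set f : Finset m → ℝ := fun S => Matrix.detRowAlternating
      (S.piecewise (fun _ => b) (fun i => M i)) with hf
  have hzero : ∀ S : Finset m, S ∉ insert (∅ : Finset m)
      (Finset.univ.image fun k => ({k} : Finset m)) → f S = 0 := by
    intro S hS
    simp only [Finset.mem_insert, Finset.mem_image, Finset.mem_univ, true_and] at hS
    push_neg at hS
    obtain ⟨hne, hsing⟩ := hS
    have hcard : 1 < S.card := by
      rcases Nat.lt_or_ge S.card 2 with h | h
      · interval_cases h' : S.card
        · exact absurd (Finset.card_eq_zero.mp h') hne.ne_empty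
        · obtain ⟨k, hk⟩ := Finset.card_eq_one.mp h'
          exact absurd hk.symm (hsing k)
      · omega
    obtain ⟨i, hi, j, hj, hij⟩ := Finset.one_lt_card.mp hcard
    refine AlternatingMap.map_eq_zero_of_eq _ _ ?_ hij
    rw [Finset.piecewise_eq_of_mem _ _ _ hi, Finset.piecewise_eq_of_mem _ _ _ hj]
  have hsplit : ∑ S : Finset m, f S = f ∅ + ∑ k, f {k} := by
    rw [← Finset.sum_subset (Finset.subset_univ
      (insert (∅ : Finset m) (Finset.univ.image fun k => ({k} : Finset m))))
      (fun S _ hS => hzero S hS)]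
    rw [Finset.sum_insert (by simp), Finset.sum_image (fun a _ c _ h =>
      Finset.singleton_injective h)]
  have h0 : f ∅ = M.det := by
    simp only [f, Finset.piecewise_empty]
    rfl
  have h1k : ∀ k, f {k} = ∑ l, b l * M.adjugate l k := by
    intro k
    have hupd : f {k} = (M.updateRow k b).det := by
      simp only [f, Finset.piecewise_singleton]
      rfl
    rw [hupd, ← Matrix.cramer_transpose_apply, Matrix.cramer_eq_adjugate_mulVec,
      ← Matrix.adjugate_transpose]
    simp [Matrix.mulVec, dotProduct, Matrix.transpose_apply, mul_comm]
  rw [hsplit, h0]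
  exact congrArg _ (Finset.sum_congr rfl fun k _ => h1k k)

lemma submatrix_mul_diagonal_det {n : ℕ} (G : Matrix (Fin n) (Fin n) ℝ) (v : Fin n → ℝ)
    (I : Finset (Fin n)) :
    ((G * Matrix.diagonal v).submatrix (Subtype.val : {x // x ∈ I} → Fin n)
      Subtype.val).det = gI G I * ∏ i ∈ I, v i := by
  have h : (G * Matrix.diagonal v).submatrix (Subtype.val : {x // x ∈ I} → Fin n) Subtype.val
      = (G.submatrix Subtype.val Subtype.val) *
        Matrix.diagonal (fun i : {x // x ∈ I} => v i.val) := by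
    ext i j
    simp [Matrix.mul_diagonal, Subtype.ext_iff]
  rw [h, Matrix.det_mul, Matrix.det_diagonal, gI]
  congr 1
  exact Finset.prod_coe_sort I v

lemma submatrix_add_ones_mul_diagonal_det {n : ℕ} (G : Matrix (Fin n) (Fin n) ℝ)
    (v : Fin n → ℝ) (I : Finset (Fin n)) :
    (((G + Matrix.of (fun _ _ => (1 : ℝ))) * Matrix.diagonal v).submatrix
      (Subtype.val : {x // x ∈ I} → Fin n) Subtype.val).det
      = (gI G I + cI G I) * ∏ i ∈ I, v i := by
  have h := submatrix_mul_diagonal_det (G + Matrix.of (fun _ _ => (1 : ℝ))) v I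
  rw [h]
  congr 1
  have h2 : (G + Matrix.of (fun _ _ => (1 : ℝ))).submatrix
      (Subtype.val : {x // x ∈ I} → Fin n) Subtype.val
      = G.submatrix Subtype.val Subtype.val
        + Matrix.of (fun _ => fun _ : {x // x ∈ I} => (1 : ℝ)) := by
    ext i j
    simp [Matrix.add_apply]
  rw [gI, h2, det_add_const_rows]
  congr 1
  rw [cI]
  refine Finset.sum_congr rfl fun k _ => Finset.sum_congr rfl fun l _ => ?_
  simp [cofactor, Matrix.transpose_apply]

/-- If `det(1 + G diag(v)) ≠ 0`, then
`∑_{k,ℓ} v_k ((1 + G diag(v))⁻¹)_{k,ℓ} = (∑_I c_I v_I) / (∑_I g_I v_I)`. -/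
theorem inv_quadratic_form_eq (n : ℕ) (G : Matrix (Fin n) (Fin n) ℝ) (v : Fin n → ℝ)
    (hdet : (1 + G * Matrix.diagonal v).det ≠ 0) :
    ∑ k : Fin n, ∑ l : Fin n, v k * (1 + G * Matrix.diagonal v)⁻¹ k l =
      (∑ I : Finset (Fin n), cI G I * ∏ i ∈ I, v i) /
        (∑ I : Finset (Fin n), gI G I * ∏ i ∈ I, v i) := by
  set A := 1 + G * Matrix.diagonal v with hA
  have hD : A.det = ∑ I : Finset (Fin n), gI G I * ∏ i ∈ I, v i := by
    rw [hA, det_one_add_expand]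
    exact Finset.sum_congr rfl fun I _ => submatrix_mul_diagonal_det G v I
  have hDN : (A + Matrix.of (fun _ => v)).det
      = ∑ I : Finset (Fin n), (gI G I + cI G I) * ∏ i ∈ I, v i := by
    have heq : A + Matrix.of (fun _ => v)
        = 1 + (G + Matrix.of (fun _ _ => (1 : ℝ))) * Matrix.diagonal v := by
      ext i j
      simp only [hA, Matrix.add_apply, Matrix.of_apply, Matrix.mul_diagonal,
        Matrix.add_apply]
      ring
    rw [heq, det_one_add_expand]
    exact Finset.sum_congr rfl fun I _ => submatrix_add_ones_mul_diagonal_det G v I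
  have hBC := det_add_const_rows A v
  have hsum : ∑ I : Finset (Fin n), (gI G I + cI G I) * ∏ i ∈ I, v i
      = (∑ I : Finset (Fin n), gI G I * ∏ i ∈ I, v i)
        + ∑ I : Finset (Fin n), cI G I * ∏ i ∈ I, v i := by
    rw [← Finset.sum_add_distrib]
    exact Finset.sum_congr rfl fun I _ => by ring
  have hN : ∑ k, ∑ l, v l * A.adjugate l k
      = ∑ I : Finset (Fin n), cI G I * ∏ i ∈ I, v i := by
    rw [hDN, hsum, hD] at hBC
    linarith
  have hinv : A⁻¹ = (A.det)⁻¹ • A.adjugate := by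
    rw [Matrix.inv_def, Ring.inverse_eq_inv]
  calc ∑ k : Fin n, ∑ l : Fin n, v k * A⁻¹ k l
      = (A.det)⁻¹ * ∑ k, ∑ l, v k * A.adjugate k l := by
        rw [hinv, Finset.mul_sum]
        refine Finset.sum_congr rfl fun k _ => ?_
        rw [Finset.mul_sum]
        refine Finset.sum_congr rfl fun l _ => ?_
        simp [Matrix.smul_apply]
        ring
    _ = (A.det)⁻¹ * ∑ k, ∑ l, v l * A.adjugate l k := by
        rw [Finset.sum_comm]
    _ = (∑ I : Finset (Fin n), cI G I * ∏ i ∈ I, v i) /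
        (∑ I : Finset (Fin n), gI G I * ∏ i ∈ I, v i) := by
        rw [hN, ← hD, div_eq_mul_inv, mul_comm]
end

section
/- For any real n×n matrix G and any v ∈ ℝⁿ, let C be the cofactor matrix of A = 1 + G·diag(v), i.e. C_{k,ℓ} = (−1)^{k+ℓ} times the determinant of the matrix obtained from A by deleting row k and column ℓ (so that the adjugate of A is the transpose of C). Then ∑_{k,ℓ=1}^n C_{k,ℓ} v_ℓ = ∑_{I⊆{1,…,n}} c_I v_I. -/
open Matrix

section Aux

variable {m : Type*} [Fintype m] [DecidableEq m]

/-- det of the matrix whose rows are rows of `N` on `s` and standard basis rows off `s`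
is the det of the submatrix of `N` indexed by `s`. -/
lemma det_piecewise_single (N : Matrix m m ℝ) (s : Finset m) :
    Matrix.det (Matrix.of (s.piecewise N (fun i => Pi.single i (1 : ℝ)))) =
      (N.submatrix (Subtype.val : {x // x ∈ s} → m) Subtype.val).det := by
  set M : Matrix m m ℝ := Matrix.of (s.piecewise N fun i => Pi.single i (1 : ℝ)) with hM
  have hzero : ∀ i, ¬ (i ∈ s) → ∀ j, j ∈ s → M i j = 0 := by
    intro i hi j hj
    show s.piecewise N (fun i => Pi.single i (1 : ℝ)) i j = 0
    erw [Finset.piecewise_eq_of_notMem _ _ _ hi, Pi.single_apply, if_neg]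
    rintro rfl; exact hi hj
  have h := Matrix.twoBlockTriangular_det M (fun i => i ∈ s) hzero
  have h1 : Matrix.toSquareBlockProp M (fun i => i ∈ s)
      = N.submatrix (Subtype.val : {x // x ∈ s} → m) Subtype.val := by
    ext i j
    show M i.val j.val = N i.val j.val
    show s.piecewise N (fun i => Pi.single i (1 : ℝ)) i.val j.val = N i.val j.val
    exact congrFun (Finset.piecewise_eq_of_mem _ _ _ i.2) _
  have h2 : Matrix.toSquareBlockProp M (fun i => ¬ (i ∈ s)) = 1 := by
    ext i j
    show M i.val j.val = (1 : Matrix {a // ¬ (a ∈ s)} {a // ¬ (a ∈ s)} ℝ) i j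
    show s.piecewise N (fun i => Pi.single i (1 : ℝ)) i.val j.val = _
    erw [Finset.piecewise_eq_of_notMem _ _ _ i.2, Pi.single_apply, Matrix.one_apply]
    simp [Subtype.ext_iff, eq_comm]
  rw [h, h1, h2, Matrix.det_one, mul_one]
  congr!

/-- Expansion of `det (diagonal d + N)` over subsets. -/
lemma det_diagonal_add (d : m → ℝ) (N : Matrix m m ℝ) :
    (Matrix.diagonal d + N).det =
      ∑ I : Finset m, (∏ i ∈ Iᶜ, d i) *
        (N.submatrix (Subtype.val : {x // x ∈ I} → m) Subtype.val).det := by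
  have key : (Matrix.diagonal d + N)
      = N + Matrix.of (fun i => d i • (Pi.single i 1 : m → ℝ)) := by
    ext i j
    by_cases h : i = j
    · subst h; simp [Matrix.diagonal_apply, add_comm]
    · simp [Matrix.diagonal_apply, h, Pi.single_apply, Ne.symm h]
  rw [key]
  have hADD := (Matrix.detRowAlternating (n := m) (R := ℝ)).toMultilinearMap.map_add_univ
    N (Matrix.of (fun i => d i • (Pi.single i 1 : m → ℝ)))
  refine hADD.trans (Finset.sum_congr rfl fun s _ => ?_)
  have hpw : (s.piecewise N (Matrix.of (fun i => d i • (Pi.single i 1 : m → ℝ))))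
      = sᶜ.piecewise (fun i => d i • (s.piecewise N (fun i => Pi.single i (1 : ℝ))) i)
          (s.piecewise N (fun i => Pi.single i (1 : ℝ))) := by
    funext i
    by_cases h : i ∈ s
    · erw [Finset.piecewise_eq_of_mem _ _ _ h,
        Finset.piecewise_eq_of_notMem _ _ _ (by simpa using h),
        Finset.piecewise_eq_of_mem _ _ _ h]
    · erw [Finset.piecewise_eq_of_notMem _ _ _ h,
        Finset.piecewise_eq_of_mem _ _ _ (by simpa using h),
        Finset.piecewise_eq_of_notMem _ _ _ h]
      rfl
  rw [hpw, MultilinearMap.map_piecewise_smul, smul_eq_mul]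
  congr 1
  exact det_piecewise_single N s

/-- Summing cofactors along row `k` against weights `w` gives the det with row `k`
replaced by `w`. -/
lemma sum_cofactor_mul (M : Matrix m m ℝ) (k : m) (w : m → ℝ) :
    ∑ l, cofactor M k l * w l = (M.updateRow k w).det := by
  have hw : w = ∑ l, w l • (Pi.single l 1 : m → ℝ) := by
    have h1 : ∀ l, w l • (Pi.single l 1 : m → ℝ) = Pi.single l (w l) := by
      intro l; rw [← Pi.single_smul, smul_eq_mul, mul_one]
    simp_rw [h1, Finset.univ_sum_single]
  calc ∑ l, cofactor M k l * w l
      = ∑ l, w l * (M.updateRow k (Pi.single l 1)).det := by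
        simp [cofactor, Matrix.transpose_apply, Matrix.adjugate_apply, mul_comm]
    _ = ∑ l, (M.updateRow k (w l • (Pi.single l 1 : m → ℝ))).det := by
        simp [Matrix.det_updateRow_smul]
    _ = (M.updateRow k (∑ l, w l • (Pi.single l 1 : m → ℝ))).det := by
        exact ((Matrix.detRowAlternating (n := m) (R := ℝ)).toMultilinearMap.map_update_sum
          Finset.univ k (fun l => w l • (Pi.single l 1 : m → ℝ)) M).symm
    _ = (M.updateRow k w).det := by rw [← hw]

lemma prod_compl_ite (I : Finset m) (k : m) :
    (∏ i ∈ Iᶜ, (if i = k then (0 : ℝ) else 1)) = if k ∈ I then 1 else 0 := by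
  by_cases h : k ∈ I
  · rw [if_pos h]
    apply Finset.prod_eq_one
    intro i hi
    rw [if_neg]
    rintro rfl
    exact (Finset.mem_compl.mp hi) h
  · rw [if_neg h]
    exact Finset.prod_eq_zero (Finset.mem_compl.mpr h) (by simp)

lemma submatrix_mul_diagonal (M : Matrix m m ℝ) (v : m → ℝ) (I : Finset m) :
    ((M * Matrix.diagonal v).submatrix (Subtype.val : {x // x ∈ I} → m) Subtype.val).det
      = (M.submatrix (Subtype.val : {x // x ∈ I} → m) Subtype.val).det * ∏ i ∈ I, v i := by
  have h : (M * Matrix.diagonal v).submatrix (Subtype.val : {x // x ∈ I} → m) Subtype.val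
      = M.submatrix (Subtype.val : {x // x ∈ I} → m) Subtype.val
        * Matrix.diagonal (fun i : {x // x ∈ I} => v i.val) := by
    ext i j
    simp [Matrix.mul_diagonal]
  rw [h, Matrix.det_mul, Matrix.det_diagonal]
  congr 1
  exact Finset.prod_coe_sort I v

lemma submatrix_updateRow (G : Matrix m m ℝ) (I : Finset m) (k : {x // x ∈ I}) :
    (G.updateRow k.val (fun _ => (1 : ℝ))).submatrix (Subtype.val : {x // x ∈ I} → m)
        (Subtype.val : {x // x ∈ I} → m)
      = (G.submatrix (Subtype.val : {x // x ∈ I} → m)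
          (Subtype.val : {x // x ∈ I} → m)).updateRow k
          (fun _ => (1 : ℝ)) := by
  ext i j
  by_cases h : i = k
  · subst h; simp
  · rw [Matrix.submatrix_apply, Matrix.updateRow_ne (fun hh => h (Subtype.ext hh)),
      Matrix.updateRow_ne h, Matrix.submatrix_apply]

end Aux

lemma updateRow_one_add {n : ℕ} (G : Matrix (Fin n) (Fin n) ℝ) (v : Fin n → ℝ) (k : Fin n) :
    (1 + G * Matrix.diagonal v).updateRow k v =
      Matrix.diagonal (fun i => if i = k then (0 : ℝ) else 1) +
        (G.updateRow k (fun _ => 1)) * Matrix.diagonal v := by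
  ext i j
  by_cases h : i = k
  · subst h
    simp [Matrix.mul_diagonal, Matrix.diagonal_apply, Matrix.updateRow_apply, eq_comm]
  · simp [Matrix.mul_diagonal, Matrix.diagonal_apply, Matrix.updateRow_apply, h,
      Matrix.one_apply]

lemma cI_eq {n : ℕ} (G : Matrix (Fin n) (Fin n) ℝ) (I : Finset (Fin n)) :
    cI G I = ∑ k : {x // x ∈ I},
      ((G.submatrix (Subtype.val : {x // x ∈ I} → Fin n) Subtype.val).updateRow k
        (fun _ => (1 : ℝ))).det := by
  unfold cI
  refine Finset.sum_congr rfl fun k _ => ?_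
  have h := sum_cofactor_mul
    (G.submatrix (Subtype.val : {x // x ∈ I} → Fin n) Subtype.val) k (fun _ => (1 : ℝ))
  simpa using h

/-- With `C` the cofactor matrix of `A = 1 + G diag(v)` (so `adjugate A = Cᵀ`),
`∑_{k,ℓ} C_{k,ℓ} v_ℓ = ∑_{I ⊆ {1,…,n}} c_I v_I`. -/
theorem cofactor_sum_eq (n : ℕ) (G : Matrix (Fin n) (Fin n) ℝ) (v : Fin n → ℝ) :
    ∑ k : Fin n, ∑ l : Fin n, cofactor (1 + G * Matrix.diagonal v) k l * v l =
      ∑ I : Finset (Fin n), cI G I * ∏ i ∈ I, v i := by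
  have step : ∑ k : Fin n, ∑ l : Fin n, cofactor (1 + G * Matrix.diagonal v) k l * v l
      = ∑ k : Fin n, ∑ I : Finset (Fin n), (if k ∈ I then (1:ℝ) else 0) *
          (((G.updateRow k (fun _ => 1)).submatrix
            (Subtype.val : {x // x ∈ I} → Fin n) Subtype.val).det * ∏ i ∈ I, v i) := by
    refine Finset.sum_congr rfl fun k _ => ?_
    rw [sum_cofactor_mul, updateRow_one_add, det_diagonal_add]
    refine Finset.sum_congr rfl fun I _ => ?_
    rw [prod_compl_ite, submatrix_mul_diagonal]
  rw [step, Finset.sum_comm]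
  refine Finset.sum_congr rfl fun I _ => ?_
  rw [cI_eq, Finset.sum_mul]
  simp_rw [ite_mul, one_mul, zero_mul]
  rw [Finset.sum_ite_mem, Finset.univ_inter]
  have hsub : ∀ k : {x // x ∈ I},
      ((G.submatrix (Subtype.val : {x // x ∈ I} → Fin n) Subtype.val).updateRow k
        (fun _ => (1 : ℝ))).det * ∏ i ∈ I, v i
      = ((G.updateRow k.val (fun _ => (1 : ℝ))).submatrix
          (Subtype.val : {x // x ∈ I} → Fin n) Subtype.val).det * ∏ i ∈ I, v i := by
    intro k; rw [submatrix_updateRow]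
  rw [Finset.sum_congr rfl fun k _ => hsub k]
  rw [Finset.sum_coe_sort I (fun a => ((G.updateRow a (fun _ => (1 : ℝ))).submatrix
      (Subtype.val : {x // x ∈ I} → Fin n) Subtype.val).det * ∏ i ∈ I, v i)]
end

section
/- For every y ∈ ℤ² there exists a function ψ_y : ℕ → [0,∞) with lim_{r→∞} ψ_y(r) = 0, independent of N, such that for every integer N > 1 and every z ∈ {1,…,N}, setting x = (0,z) ∈ J₀: 0 ≤ (3/2)·a(y) − (∑_{x'∈J₀} g(x,x') − ∑_{x''∈J_y} g(x,x'')) ≤ ψ_y(min(z, N+1−z)). -/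
open Filter

/-- `srw3 n x` is the probability that discrete-time simple random walk on
`ℤ³ = (ℤ × ℤ) × ℤ` started at `0` is at `x` at time `n`. -/
noncomputable def srw3 : ℕ → (ℤ × ℤ) × ℤ → ℝ
  | 0, x => if x = 0 then 1 else 0
  | n + 1, x =>
      (srw3 n (x + ((1, 0), 0)) + srw3 n (x - ((1, 0), 0)) +
        srw3 n (x + ((0, 1), 0)) + srw3 n (x - ((0, 1), 0)) +
        srw3 n (x + ((0, 0), 1)) + srw3 n (x - ((0, 0), 1))) / 6

/-- The Green function of simple random walk on `ℤ³`:
`g(x) = ∑_{n ≥ 0} P₀[Xₙ = x]`, so that `g(x,x') = green3 (x' - x)`. -/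
noncomputable def green3 (x : (ℤ × ℤ) × ℤ) : ℝ := ∑' n : ℕ, srw3 n x

/-- `J = {1, …, N} ⊆ ℤ`. -/
noncomputable def JN (N : ℕ) : Finset ℤ := Finset.Icc (1 : ℤ) (N : ℤ)

/-- `srw2 n y` is the probability that discrete-time simple random walk on `ℤ²`
started at `0` is at `y` at time `n`. -/
noncomputable def srw2 : ℕ → ℤ × ℤ → ℝ
  | 0, y => if y = 0 then 1 else 0
  | n + 1, y =>
      (srw2 n (y + (1, 0)) + srw2 n (y - (1, 0)) +
        srw2 n (y + (0, 1)) + srw2 n (y - (0, 1))) / 4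

/-- The potential kernel of two-dimensional simple random walk:
`a(y) = lim_n ∑_{j=0}^n (P₀[Xⱼ = 0] - P₀[Xⱼ = y])`. -/
noncomputable def aker (y : ℤ × ℤ) : ℝ :=
  limUnder atTop (fun n : ℕ => ∑ j ∈ Finset.range (n + 1), (srw2 j 0 - srw2 j y))

open MeasureTheory Real Set

noncomputable section

namespace RodAux

def I1 : Set ℝ := Set.Icc (-π) π
noncomputable def μ1 : Measure ℝ := volume.restrict I1
noncomputable def μ2 : Measure (ℝ × ℝ) := μ1.prod μ1
noncomputable def μ3 : Measure ((ℝ × ℝ) × ℝ) := μ2.prod μ1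

instance : IsFiniteMeasure μ1 :=
  ⟨by rw [μ1, Measure.restrict_apply_univ]; exact measure_Icc_lt_top⟩
instance : IsFiniteMeasure μ2 := by rw [μ2]; infer_instance
instance : IsFiniteMeasure μ3 := by rw [μ3]; infer_instance

lemma μ1_univ : (μ1 Set.univ).toReal = 2 * π := by
  rw [μ1, Measure.restrict_apply_univ, I1, Real.volume_Icc]
  rw [ENNReal.toReal_ofReal (by linarith [pi_pos] : (0:ℝ) ≤ π - -π)]
  ring

def e2 (y : ℤ × ℤ) (θ : ℝ × ℝ) : ℝ := y.1 * θ.1 + y.2 * θ.2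
def e3 (x : (ℤ × ℤ) × ℤ) (ξ : (ℝ × ℝ) × ℝ) : ℝ := e2 x.1 ξ.1 + x.2 * ξ.2
noncomputable def F2 (θ : ℝ × ℝ) : ℝ := (Real.cos θ.1 + Real.cos θ.2) / 2
noncomputable def F3 (ξ : (ℝ × ℝ) × ℝ) : ℝ := (Real.cos ξ.1.1 + Real.cos ξ.1.2 + Real.cos ξ.2) / 3

lemma continuous_e2 (y : ℤ × ℤ) : Continuous (e2 y) := by unfold e2; fun_prop
lemma continuous_e3 (x : (ℤ × ℤ) × ℤ) : Continuous (e3 x) := by unfold e3 e2; fun_prop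
lemma continuous_F2 : Continuous F2 := by unfold F2; fun_prop
lemma continuous_F3 : Continuous F3 := by unfold F3; fun_prop

lemma abs_F2_le (θ : ℝ × ℝ) : |F2 θ| ≤ 1 := by
  rw [abs_le, F2]
  constructor <;> nlinarith [Real.neg_one_le_cos θ.1, Real.cos_le_one θ.1,
    Real.neg_one_le_cos θ.2, Real.cos_le_one θ.2]

lemma abs_F3_le (ξ : (ℝ × ℝ) × ℝ) : |F3 ξ| ≤ 1 := by
  rw [abs_le, F3]
  constructor <;> nlinarith [Real.neg_one_le_cos ξ.1.1, Real.cos_le_one ξ.1.1,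
    Real.neg_one_le_cos ξ.1.2, Real.cos_le_one ξ.1.2,
    Real.neg_one_le_cos ξ.2, Real.cos_le_one ξ.2]

lemma integrable_bdd {α : Type*} [MeasurableSpace α] {μ : Measure α} [IsFiniteMeasure μ]
    {f : α → ℝ} (hm : AEStronglyMeasurable f μ) {C : ℝ} (h : ∀ᵐ x ∂μ, |f x| ≤ C) :
    Integrable f μ :=
  (integrable_const C).mono' hm (h.mono fun x hx => by simpa using hx)

lemma integrable_bdd' {α : Type*} [MeasurableSpace α] {μ : Measure α} [IsFiniteMeasure μ]
    {f : α → ℝ} (hm : AEStronglyMeasurable f μ) {C : ℝ} (h : ∀ x, |f x| ≤ C) :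
    Integrable f μ :=
  integrable_bdd hm (Eventually.of_forall h)

/-- The basic 1-dimensional Fourier integral. -/
lemma integral_cos_lin (m : ℤ) (φ : ℝ) :
    ∫ t, Real.cos (φ + m * t) ∂μ1 = if m = 0 then 2 * π * Real.cos φ else 0 := by
  have h2π : -π ≤ π := by linarith [pi_pos]
  have hIcc : ∫ t, Real.cos (φ + m * t) ∂μ1 = ∫ t in (-π)..π, Real.cos (φ + m * t) := by
    rw [μ1, I1, intervalIntegral.integral_of_le h2π, integral_Icc_eq_integral_Ioc]
  rw [hIcc]
  by_cases hm : m = 0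
  · simp only [hm, Int.cast_zero, zero_mul, add_zero, if_pos]
    rw [intervalIntegral.integral_const, smul_eq_mul, sub_neg_eq_add]
    ring
  · have hm' : (m : ℝ) ≠ 0 := Int.cast_ne_zero.mpr hm
    rw [if_neg hm]
    have : ∀ t : ℝ, Real.cos (φ + m * t) = Real.cos ((m : ℝ) * t + φ) := by
      intro t; ring_nf
    simp only [this]
    rw [intervalIntegral.integral_comp_mul_add Real.cos hm' φ, integral_cos]
    have h1 : Real.sin ((m:ℝ) * π + φ) = Real.cos (m * π) * Real.sin φ := by
      rw [Real.sin_add, Real.sin_int_mul_pi]; ring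
    have h2 : Real.sin ((m:ℝ) * (-π) + φ) = Real.cos (m * π) * Real.sin φ := by
      have : (m:ℝ) * (-π) + φ = φ - (m:ℝ) * π := by ring
      rw [this, Real.sin_sub, Real.sin_int_mul_pi]; ring
    rw [h1, h2]; simp

lemma integrable_cos_e2_mul (f : (ℝ × ℝ) → ℝ) (hf : Continuous f) (hb : ∀ θ, |f θ| ≤ 1) :
    Integrable f μ2 := integrable_bdd' hf.aestronglyMeasurable hb

/-- 2-dimensional base Fourier integral. -/
lemma integral_cos_e2 (v : ℤ × ℤ) :
    ∫ θ, Real.cos (e2 v θ) ∂μ2 = if v = 0 then (2 * π) ^ 2 else 0 := by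
  have hi : Integrable (fun θ : ℝ × ℝ => Real.cos (e2 v θ)) (μ1.prod μ1) := by
    rw [← μ2]
    exact integrable_bdd' (Real.continuous_cos.comp (continuous_e2 v)).aestronglyMeasurable
      (fun θ => Real.abs_cos_le_one (e2 v θ))
  rw [μ2, integral_prod _ hi]
  have hinner : ∀ t1 : ℝ, (∫ t2, Real.cos (e2 v (t1, t2)) ∂μ1) =
      if v.2 = 0 then 2 * π * Real.cos (v.1 * t1) else 0 := by
    intro t1
    simpa [e2] using integral_cos_lin v.2 (v.1 * t1)
  rw [integral_congr_ae (Eventually.of_forall hinner)]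
  by_cases h2 : v.2 = 0
  · simp only [if_pos h2]
    have : ∀ t1 : ℝ, 2 * π * Real.cos ((v.1 : ℝ) * t1) = (2 * π) • Real.cos (0 + v.1 * t1) := by
      intro t1; simp [smul_eq_mul]
    rw [integral_congr_ae (Eventually.of_forall this), integral_smul, integral_cos_lin v.1 0]
    by_cases h1 : v.1 = 0
    · have : v = 0 := Prod.ext h1 h2
      simp [h1, this]; ring
    · have : v ≠ 0 := fun hv => h1 (by rw [hv]; rfl)
      simp [h1, this]
  · have : v ≠ 0 := fun hv => h2 (by rw [hv]; rfl)
    simp [h2, this]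

/-- 3-dimensional base Fourier integral. -/
lemma integral_cos_e3 (x : (ℤ × ℤ) × ℤ) :
    ∫ ξ, Real.cos (e3 x ξ) ∂μ3 = if x = 0 then (2 * π) ^ 3 else 0 := by
  have hi : Integrable (fun ξ : (ℝ × ℝ) × ℝ => Real.cos (e3 x ξ)) (μ2.prod μ1) := by
    rw [← μ3]
    exact integrable_bdd' (Real.continuous_cos.comp (continuous_e3 x)).aestronglyMeasurable
      (fun ξ => Real.abs_cos_le_one (e3 x ξ))
  rw [μ3, integral_prod _ hi]
  have hinner : ∀ θ : ℝ × ℝ, (∫ t, Real.cos (e3 x (θ, t)) ∂μ1) =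
      if x.2 = 0 then 2 * π * Real.cos (e2 x.1 θ) else 0 := by
    intro θ
    simpa [e3] using integral_cos_lin x.2 (e2 x.1 θ)
  rw [integral_congr_ae (Eventually.of_forall hinner)]
  by_cases h2 : x.2 = 0
  · simp only [if_pos h2]
    have : ∀ θ : ℝ × ℝ, 2 * π * Real.cos (e2 x.1 θ) = (2 * π) • Real.cos (e2 x.1 θ) := by
      intro θ; simp [smul_eq_mul]
    rw [integral_congr_ae (Eventually.of_forall this), integral_smul, integral_cos_e2 x.1]
    by_cases h1 : x.1 = 0
    · have : x = 0 := Prod.ext h1 h2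
      simp [h1, this]; ring
    · have : x ≠ 0 := fun hv => h1 (by rw [hv]; rfl)
      simp [h1, this]
  · have : x ≠ 0 := fun hv => h2 (by rw [hv]; rfl)
    simp [h2, this]

end RodAux

-- appended to stage1
namespace RodAux2
open RodAux

lemma srw3_nonneg (n : ℕ) (x : (ℤ × ℤ) × ℤ) : 0 ≤ srw3 n x := by
  induction n generalizing x with
  | zero => rw [srw3]; split <;> norm_num
  | succ n ih =>
    rw [srw3]
    have h1 := ih (x + ((1, 0), 0)); have h2 := ih (x - ((1, 0), 0))
    have h3 := ih (x + ((0, 1), 0)); have h4 := ih (x - ((0, 1), 0))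
    have h5 := ih (x + ((0, 0), 1)); have h6 := ih (x - ((0, 0), 1))
    linarith

lemma srw2_nonneg (n : ℕ) (y : ℤ × ℤ) : 0 ≤ srw2 n y := by
  induction n generalizing y with
  | zero => rw [srw2]; split <;> norm_num
  | succ n ih =>
    rw [srw2]
    have h1 := ih (y + (1, 0)); have h2 := ih (y - (1, 0))
    have h3 := ih (y + (0, 1)); have h4 := ih (y - (0, 1))
    linarith

lemma integrable_F3_cos (n : ℕ) (x' : (ℤ × ℤ) × ℤ) :
    Integrable (fun ξ => F3 ξ ^ n * Real.cos (e3 x' ξ)) μ3 := by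
  refine integrable_bdd' ?_ (C := 1) ?_
  · exact ((continuous_F3.pow n).mul
      (Real.continuous_cos.comp (continuous_e3 x'))).aestronglyMeasurable
  · intro ξ
    rw [abs_mul, abs_pow]
    exact mul_le_one₀ (pow_le_one₀ (abs_nonneg _) (abs_F3_le ξ)) (abs_nonneg _)
      (Real.abs_cos_le_one _)

lemma integrable_F2_cos (n : ℕ) (y : ℤ × ℤ) :
    Integrable (fun θ => F2 θ ^ n * Real.cos (e2 y θ)) μ2 := by
  refine integrable_bdd' ?_ (C := 1) ?_
  · exact ((continuous_F2.pow n).mul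
      (Real.continuous_cos.comp (continuous_e2 y))).aestronglyMeasurable
  · intro θ
    rw [abs_mul, abs_pow]
    exact mul_le_one₀ (pow_le_one₀ (abs_nonneg _) (abs_F2_le θ)) (abs_nonneg _)
      (Real.abs_cos_le_one _)

lemma srw3_fourier (n : ℕ) (x : (ℤ × ℤ) × ℤ) :
    srw3 n x = ((2 * π) ^ 3)⁻¹ * ∫ ξ, F3 ξ ^ n * Real.cos (e3 x ξ) ∂μ3 := by
  have h2π : ((2 * π) ^ 3 : ℝ) ≠ 0 := by positivity
  induction n generalizing x with
  | zero =>
    simp only [srw3, pow_zero, one_mul, integral_cos_e3]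
    by_cases hx : x = 0
    · rw [if_pos hx, if_pos hx, inv_mul_cancel₀ h2π]
    · rw [if_neg hx, if_neg hx, mul_zero]
  | succ n ih =>
    have h6 : ∀ ξ : (ℝ × ℝ) × ℝ, F3 ξ ^ (n + 1) * Real.cos (e3 x ξ) =
        (F3 ξ ^ n * Real.cos (e3 (x + ((1, 0), 0)) ξ) +
          F3 ξ ^ n * Real.cos (e3 (x - ((1, 0), 0)) ξ) +
          F3 ξ ^ n * Real.cos (e3 (x + ((0, 1), 0)) ξ) +
          F3 ξ ^ n * Real.cos (e3 (x - ((0, 1), 0)) ξ) +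
          F3 ξ ^ n * Real.cos (e3 (x + ((0, 0), 1)) ξ) +
          F3 ξ ^ n * Real.cos (e3 (x - ((0, 0), 1)) ξ)) / 6 := by
      intro ξ
      have ha1 : e3 (x + ((1, 0), 0)) ξ = e3 x ξ + ξ.1.1 := by
        simp only [e3, e2, Prod.fst_add, Prod.snd_add]; push_cast; ring
      have hs1 : e3 (x - ((1, 0), 0)) ξ = e3 x ξ - ξ.1.1 := by
        simp only [e3, e2, Prod.fst_sub, Prod.snd_sub]; push_cast; ring
      have ha2 : e3 (x + ((0, 1), 0)) ξ = e3 x ξ + ξ.1.2 := by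
        simp only [e3, e2, Prod.fst_add, Prod.snd_add]; push_cast; ring
      have hs2 : e3 (x - ((0, 1), 0)) ξ = e3 x ξ - ξ.1.2 := by
        simp only [e3, e2, Prod.fst_sub, Prod.snd_sub]; push_cast; ring
      have ha3 : e3 (x + ((0, 0), 1)) ξ = e3 x ξ + ξ.2 := by
        simp only [e3, e2, Prod.fst_add, Prod.snd_add]; push_cast; ring
      have hs3 : e3 (x - ((0, 0), 1)) ξ = e3 x ξ - ξ.2 := by
        simp only [e3, e2, Prod.fst_sub, Prod.snd_sub]; push_cast; ring
      rw [ha1, hs1, ha2, hs2, ha3, hs3]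
      simp only [Real.cos_add, Real.cos_sub, pow_succ, F3]
      ring
    calc srw3 (n + 1) x
        = (((2 * π) ^ 3)⁻¹ * ∫ ξ, F3 ξ ^ n * Real.cos (e3 (x + ((1, 0), 0)) ξ) ∂μ3 +
           ((2 * π) ^ 3)⁻¹ * ∫ ξ, F3 ξ ^ n * Real.cos (e3 (x - ((1, 0), 0)) ξ) ∂μ3 +
           ((2 * π) ^ 3)⁻¹ * ∫ ξ, F3 ξ ^ n * Real.cos (e3 (x + ((0, 1), 0)) ξ) ∂μ3 +
           ((2 * π) ^ 3)⁻¹ * ∫ ξ, F3 ξ ^ n * Real.cos (e3 (x - ((0, 1), 0)) ξ) ∂μ3 +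
           ((2 * π) ^ 3)⁻¹ * ∫ ξ, F3 ξ ^ n * Real.cos (e3 (x + ((0, 0), 1)) ξ) ∂μ3 +
           ((2 * π) ^ 3)⁻¹ * ∫ ξ, F3 ξ ^ n * Real.cos (e3 (x - ((0, 0), 1)) ξ) ∂μ3) / 6 := by
          rw [srw3]
          rw [ih, ih, ih, ih, ih, ih]
      _ = ((2 * π) ^ 3)⁻¹ * ∫ ξ, F3 ξ ^ (n + 1) * Real.cos (e3 x ξ) ∂μ3 := by
          rw [integral_congr_ae (Eventually.of_forall h6)]
          have i1 := integrable_F3_cos n (x + ((1, 0), 0))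
          have i2 := integrable_F3_cos n (x - ((1, 0), 0))
          have i3 := integrable_F3_cos n (x + ((0, 1), 0))
          have i4 := integrable_F3_cos n (x - ((0, 1), 0))
          have i5 := integrable_F3_cos n (x + ((0, 0), 1))
          have i6 := integrable_F3_cos n (x - ((0, 0), 1))
          have h12 : Integrable (fun ξ => F3 ξ ^ n * Real.cos (e3 (x + ((1, 0), 0)) ξ) +
              F3 ξ ^ n * Real.cos (e3 (x - ((1, 0), 0)) ξ)) μ3 := by exact i1.add i2
          have h13 : Integrable (fun ξ => F3 ξ ^ n * Real.cos (e3 (x + ((1, 0), 0)) ξ) +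
              F3 ξ ^ n * Real.cos (e3 (x - ((1, 0), 0)) ξ) +
              F3 ξ ^ n * Real.cos (e3 (x + ((0, 1), 0)) ξ)) μ3 := by exact h12.add i3
          have h14 : Integrable (fun ξ => F3 ξ ^ n * Real.cos (e3 (x + ((1, 0), 0)) ξ) +
              F3 ξ ^ n * Real.cos (e3 (x - ((1, 0), 0)) ξ) +
              F3 ξ ^ n * Real.cos (e3 (x + ((0, 1), 0)) ξ) +
              F3 ξ ^ n * Real.cos (e3 (x - ((0, 1), 0)) ξ)) μ3 := by exact h13.add i4
          have h15 : Integrable (fun ξ => F3 ξ ^ n * Real.cos (e3 (x + ((1, 0), 0)) ξ) +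
              F3 ξ ^ n * Real.cos (e3 (x - ((1, 0), 0)) ξ) +
              F3 ξ ^ n * Real.cos (e3 (x + ((0, 1), 0)) ξ) +
              F3 ξ ^ n * Real.cos (e3 (x - ((0, 1), 0)) ξ) +
              F3 ξ ^ n * Real.cos (e3 (x + ((0, 0), 1)) ξ)) μ3 := by exact h14.add i5
          rw [integral_div, integral_add h15 i6, integral_add h14 i5, integral_add h13 i4,
            integral_add h12 i3, integral_add i1 i2]
          ring

lemma srw2_fourier (n : ℕ) (y : ℤ × ℤ) :
    srw2 n y = ((2 * π) ^ 2)⁻¹ * ∫ θ, F2 θ ^ n * Real.cos (e2 y θ) ∂μ2 := by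
  have h2π : ((2 * π) ^ 2 : ℝ) ≠ 0 := by positivity
  induction n generalizing y with
  | zero =>
    simp only [srw2, pow_zero, one_mul, integral_cos_e2]
    by_cases hy : y = 0
    · rw [if_pos hy, if_pos hy, inv_mul_cancel₀ h2π]
    · rw [if_neg hy, if_neg hy, mul_zero]
  | succ n ih =>
    have h4 : ∀ θ : ℝ × ℝ, F2 θ ^ (n + 1) * Real.cos (e2 y θ) =
        (F2 θ ^ n * Real.cos (e2 (y + (1, 0)) θ) +
          F2 θ ^ n * Real.cos (e2 (y - (1, 0)) θ) +
          F2 θ ^ n * Real.cos (e2 (y + (0, 1)) θ) +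
          F2 θ ^ n * Real.cos (e2 (y - (0, 1)) θ)) / 4 := by
      intro θ
      have ha1 : e2 (y + (1, 0)) θ = e2 y θ + θ.1 := by
        simp only [e2, Prod.fst_add, Prod.snd_add]; push_cast; ring
      have hs1 : e2 (y - (1, 0)) θ = e2 y θ - θ.1 := by
        simp only [e2, Prod.fst_sub, Prod.snd_sub]; push_cast; ring
      have ha2 : e2 (y + (0, 1)) θ = e2 y θ + θ.2 := by
        simp only [e2, Prod.fst_add, Prod.snd_add]; push_cast; ring
      have hs2 : e2 (y - (0, 1)) θ = e2 y θ - θ.2 := by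
        simp only [e2, Prod.fst_sub, Prod.snd_sub]; push_cast; ring
      rw [ha1, hs1, ha2, hs2]
      simp only [Real.cos_add, Real.cos_sub, pow_succ, F2]
      ring
    calc srw2 (n + 1) y
        = (((2 * π) ^ 2)⁻¹ * ∫ θ, F2 θ ^ n * Real.cos (e2 (y + (1, 0)) θ) ∂μ2 +
           ((2 * π) ^ 2)⁻¹ * ∫ θ, F2 θ ^ n * Real.cos (e2 (y - (1, 0)) θ) ∂μ2 +
           ((2 * π) ^ 2)⁻¹ * ∫ θ, F2 θ ^ n * Real.cos (e2 (y + (0, 1)) θ) ∂μ2 +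
           ((2 * π) ^ 2)⁻¹ * ∫ θ, F2 θ ^ n * Real.cos (e2 (y - (0, 1)) θ) ∂μ2) / 4 := by
          rw [srw2]
          rw [ih, ih, ih, ih]
      _ = ((2 * π) ^ 2)⁻¹ * ∫ θ, F2 θ ^ (n + 1) * Real.cos (e2 y θ) ∂μ2 := by
          rw [integral_congr_ae (Eventually.of_forall h4)]
          have i1 := integrable_F2_cos n (y + (1, 0))
          have i2 := integrable_F2_cos n (y - (1, 0))
          have i3 := integrable_F2_cos n (y + (0, 1))
          have i4 := integrable_F2_cos n (y - (0, 1))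
          have h12 : Integrable (fun θ => F2 θ ^ n * Real.cos (e2 (y + (1, 0)) θ) +
              F2 θ ^ n * Real.cos (e2 (y - (1, 0)) θ)) μ2 := by exact i1.add i2
          have h13 : Integrable (fun θ => F2 θ ^ n * Real.cos (e2 (y + (1, 0)) θ) +
              F2 θ ^ n * Real.cos (e2 (y - (1, 0)) θ) +
              F2 θ ^ n * Real.cos (e2 (y + (0, 1)) θ)) μ2 := by exact h12.add i3
          rw [integral_div, integral_add h13 i4, integral_add h12 i3, integral_add i1 i2]
          ring

end RodAux2

namespace RodAux3
open RodAux RodAux2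

noncomputable def Dd (b t : ℝ) : ℝ := b + (1 - Real.cos t) / 3
noncomputable def ss (b : ℝ) : ℝ := Real.sqrt (b ^ 2 + 2 * b / 3)
noncomputable def rr (b : ℝ) : ℝ := 3 * b + 1 - 3 * ss b
noncomputable def II (b : ℝ) (j : ℕ) : ℝ := ∫ t, Real.cos (j * t) / Dd b t ∂μ1

lemma Dd_ge (b t : ℝ) : b ≤ Dd b t := by
  have := Real.cos_le_one t; unfold Dd; linarith

lemma Dd_pos {b : ℝ} (hb : 0 < b) (t : ℝ) : 0 < Dd b t := lt_of_lt_of_le hb (Dd_ge b t)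

lemma ss_sq {b : ℝ} (hb : 0 < b) : ss b ^ 2 = b ^ 2 + 2 * b / 3 := by
  rw [ss, Real.sq_sqrt (by positivity)]

lemma ss_pos {b : ℝ} (hb : 0 < b) : 0 < ss b := Real.sqrt_pos.mpr (by positivity)

lemma lt_ss {b : ℝ} (hb : 0 < b) : b < ss b := by
  have h := ss_sq hb
  have h2 := ss_pos hb
  nlinarith

lemma ss_lt {b : ℝ} (hb : 0 < b) : ss b < b + 1 / 3 := by
  have h := ss_sq hb
  have h2 := ss_pos hb
  nlinarith

lemma rr_pos {b : ℝ} (hb : 0 < b) : 0 < rr b := by have := ss_lt hb; rw [rr]; linarith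

lemma rr_lt_one {b : ℝ} (hb : 0 < b) : rr b < 1 := by have := lt_ss hb; rw [rr]; linarith

lemma continuous_invD {b : ℝ} (hb : 0 < b) : Continuous (fun t => (Dd b t)⁻¹) := by
  apply Continuous.inv₀
  · unfold Dd; fun_prop
  · exact fun t => (Dd_pos hb t).ne'

lemma integrable_cos_div {b : ℝ} (hb : 0 < b) (j : ℕ) :
    Integrable (fun t => Real.cos (j * t) / Dd b t) μ1 := by
  refine integrable_bdd' ?_ (C := b⁻¹) ?_
  · have : Continuous (fun t : ℝ => Real.cos (j * t) / Dd b t) := by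
      apply Continuous.div (by fun_prop) (by unfold Dd; fun_prop)
      exact fun t => (Dd_pos hb t).ne'
    exact this.aestronglyMeasurable
  · intro t
    rw [abs_div, abs_of_pos (Dd_pos hb t)]
    rw [div_le_iff₀ (Dd_pos hb t)]
    calc |Real.cos (j * t)| ≤ 1 := Real.abs_cos_le_one _
      _ = b⁻¹ * b := by rw [inv_mul_cancel₀ hb.ne']
      _ ≤ b⁻¹ * Dd b t := by
          exact mul_le_mul_of_nonneg_left (Dd_ge b t) (by positivity)

lemma integrable_invD {b : ℝ} (hb : 0 < b) : Integrable (fun t => (Dd b t)⁻¹) μ1 := by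
  have h := integrable_cos_div hb 0
  apply h.congr
  filter_upwards with t
  push_cast
  rw [zero_mul, Real.cos_zero, div_eq_mul_inv, one_mul]

lemma II_zero_eq {b : ℝ} : II b 0 = ∫ t, (Dd b t)⁻¹ ∂μ1 := by
  unfold II; congr 1; funext t
  push_cast
  rw [zero_mul, Real.cos_zero, div_eq_mul_inv, one_mul]

lemma abs_II_le {b : ℝ} (hb : 0 < b) (j : ℕ) : |II b j| ≤ II b 0 := by
  rw [II, II_zero_eq]
  have h0 := norm_integral_le_integral_norm (μ := μ1) (f := fun t => Real.cos (j * t) / Dd b t)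
  simp only [Real.norm_eq_abs] at h0
  refine h0.trans ?_
  apply integral_mono ((integrable_cos_div hb j).abs) (integrable_invD hb)
  intro t
  show |Real.cos (j * t) / Dd b t| ≤ (Dd b t)⁻¹
  rw [abs_div, abs_of_pos (Dd_pos hb t), div_le_iff₀ (Dd_pos hb t),
    inv_mul_cancel₀ (Dd_pos hb t).ne']
  exact Real.abs_cos_le_one _

lemma cos_div_D {b : ℝ} (hb : 0 < b) (t : ℝ) :
    Real.cos t / Dd b t = (3 * b + 1) / Dd b t - 3 := by
  have hD := (Dd_pos hb t).ne'
  field_simp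
  unfold Dd; ring

lemma II_one {b : ℝ} (hb : 0 < b) : II b 1 = (3 * b + 1) * II b 0 - 6 * π := by
  have key : ∀ t : ℝ, Real.cos ((1 : ℕ) * t) / Dd b t
      = (3 * b + 1) * (Dd b t)⁻¹ - 3 * Real.cos (0 + (0 : ℤ) * t) := by
    intro t
    push_cast
    rw [one_mul, cos_div_D hb t]
    rw [zero_mul, add_zero, Real.cos_zero, div_eq_mul_inv]
    ring
  have i1 : Integrable (fun t => (3 * b + 1) * (Dd b t)⁻¹) μ1 := by
    exact (integrable_invD hb).const_mul _
  have i2 : Integrable (fun t => 3 * Real.cos (0 + ((0 : ℤ)) * t)) μ1 := by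
    refine Integrable.const_mul ?_ 3
    exact integrable_bdd' (Real.continuous_cos.comp (by fun_prop)).aestronglyMeasurable
      (C := 1) (fun t => Real.abs_cos_le_one _)
  rw [II, integral_congr_ae (Eventually.of_forall key), integral_sub i1 i2,
    integral_const_mul, integral_const_mul, integral_cos_lin 0 0]
  rw [if_pos rfl, Real.cos_zero, II_zero_eq]
  ring

lemma II_rec {b : ℝ} (hb : 0 < b) (j : ℕ) :
    II b (j + 2) = 2 * (3 * b + 1) * II b (j + 1) - II b j := by
  have key : ∀ t : ℝ, Real.cos ((j + 2 : ℕ) * t) / Dd b t =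
      2 * (3 * b + 1) * (Real.cos ((j + 1 : ℕ) * t) / Dd b t)
        - Real.cos ((j : ℕ) * t) / Dd b t
        - 6 * Real.cos (0 + ((j + 1 : ℤ)) * t) := by
    intro t
    have hD := (Dd_pos hb t).ne'
    have trig : Real.cos ((j + 2 : ℕ) * t) + Real.cos ((j : ℕ) * t)
        = 2 * Real.cos ((j + 1 : ℕ) * t) * Real.cos t := by
      push_cast
      have h1 : ((j : ℝ) + 2) * t = (((j : ℝ) + 1) * t) + t := by ring
      have h2 : ((j : ℝ)) * t = (((j : ℝ) + 1) * t) - t := by ring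
      rw [h1, h2, Real.cos_add, Real.cos_sub]; ring
    have hcd := cos_div_D hb t
    have e1 : Real.cos ((j + 2 : ℕ) * t)
        = 2 * Real.cos ((j + 1 : ℕ) * t) * Real.cos t - Real.cos ((j : ℕ) * t) := by
      linarith [trig]
    have expand : Real.cos ((j + 2 : ℕ) * t) / Dd b t =
        2 * Real.cos ((j + 1 : ℕ) * t) * (Real.cos t / Dd b t)
          - Real.cos ((j : ℕ) * t) / Dd b t := by
      rw [e1, sub_div]
      ring
    rw [expand, hcd]
    have hc : Real.cos (0 + ((j + 1 : ℤ)) * t) = Real.cos ((j + 1 : ℕ) * t) := by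
      push_cast; ring_nf
    rw [hc]
    ring
  have i1 : Integrable (fun t => 2 * (3 * b + 1) * (Real.cos ((j + 1 : ℕ) * t) / Dd b t)) μ1 :=
    by exact (integrable_cos_div hb (j + 1)).const_mul _
  have i2 : Integrable (fun t => Real.cos ((j : ℕ) * t) / Dd b t) μ1 := integrable_cos_div hb j
  have i3 : Integrable (fun t => 6 * Real.cos (0 + ((j + 1 : ℤ)) * t)) μ1 := by
    refine Integrable.const_mul ?_ 6
    exact integrable_bdd' (Real.continuous_cos.comp (by fun_prop)).aestronglyMeasurable
      (C := 1) (fun t => Real.abs_cos_le_one _)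
  have i12 : Integrable (fun t => 2 * (3 * b + 1) * (Real.cos ((j + 1 : ℕ) * t) / Dd b t)
      - Real.cos ((j : ℕ) * t) / Dd b t) μ1 := by exact i1.sub i2
  rw [II, integral_congr_ae (Eventually.of_forall key), integral_sub i12 i3,
    integral_sub i1 i2, integral_const_mul, integral_const_mul, integral_cos_lin (j + 1) 0]
  have hne : (j + 1 : ℤ) ≠ 0 := by omega
  rw [if_neg hne]
  rw [II, II]
  ring

lemma II_geom {b : ℝ} (hb : 0 < b) (j : ℕ) : II b (j + 1) = rr b * II b j := by
  set rb : ℝ := 3 * b + 1 + 3 * ss b with hrb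
  have hss := ss_pos hb
  have hss2 := ss_sq hb
  have hrb1 : 1 < rb := by rw [hrb]; nlinarith
  have hprod : rr b * rb = 1 := by rw [rr, hrb]; nlinarith
  have hsum : rr b + rb = 2 * (3 * b + 1) := by rw [rr, hrb]; ring
  set e : ℕ → ℝ := fun j => II b (j + 1) - rr b * II b j with he
  have hee : ∀ j, e (j + 1) = rb * e j := by
    intro j
    simp only [he]
    rw [show j + 1 + 1 = j + 2 from rfl, II_rec hb j]
    linear_combination (-(II b (j + 1))) * hsum + II b j * hprod
  have hepow : ∀ j, e j = rb ^ j * e 0 := by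
    intro j
    induction j with
    | zero => simp
    | succ j ih => rw [hee j, ih]; ring
  have hbnd : ∀ j, |e j| ≤ 2 * II b 0 := by
    intro j
    simp only [he]
    have h1 := abs_II_le hb (j + 1)
    have h2 := abs_II_le hb j
    have hrr0 := rr_pos hb
    have hrr1 := rr_lt_one hb
    calc |II b (j + 1) - rr b * II b j| ≤ |II b (j + 1)| + |rr b * II b j| := abs_sub _ _
      _ ≤ II b 0 + rr b * |II b j| := by rw [abs_mul, abs_of_pos hrr0]; linarith
      _ ≤ 2 * II b 0 := by nlinarith [abs_nonneg (II b j)]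
  have he0 : e 0 = 0 := by
    by_contra h0
    have habs : 0 < |e 0| := abs_pos.mpr h0
    obtain ⟨j, hj⟩ := pow_unbounded_of_one_lt (2 * II b 0 / |e 0|) hrb1
    have heq : |e j| = rb ^ j * |e 0| := by
      rw [hepow j, abs_mul, abs_of_pos (by positivity : (0:ℝ) < rb ^ j)]
    have hlt : 2 * II b 0 < rb ^ j * |e 0| := by
      rw [div_lt_iff₀ habs] at hj; linarith
    have := hbnd j
    rw [heq] at this
    linarith
  have : e j = 0 := by rw [hepow j, he0, mul_zero]
  simp only [he] at this
  linarith

lemma II_closed {b : ℝ} (hb : 0 < b) (j : ℕ) : II b j = 2 * π / ss b * rr b ^ j := by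
  have hIj : ∀ j, II b j = rr b ^ j * II b 0 := by
    intro j
    induction j with
    | zero => simp
    | succ j ih => rw [II_geom hb j, ih]; ring
  have hss := ss_pos hb
  have hI0 : II b 0 = 2 * π / ss b := by
    have h1 : II b 1 = rr b * II b 0 := by rw [hIj 1, hIj 0]; ring
    have h2 := II_one hb
    have h3 : (3 * b + 1 - rr b) * II b 0 = 6 * π := by nlinarith [h1, h2]
    rw [rr] at h3
    have h4 : 3 * ss b * II b 0 = 6 * π := by linarith [h3]
    field_simp
    linarith [h4]
  rw [hIj j, hI0]; ring

lemma II_nonneg {b : ℝ} (hb : 0 < b) (j : ℕ) : 0 ≤ II b j := by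
  rw [II_closed hb]
  have h1 := ss_pos hb
  have h2 := rr_pos hb
  positivity

end RodAux3

namespace RodAux4
open RodAux RodAux2 RodAux3

noncomputable def bb (θ : ℝ × ℝ) : ℝ := 2 / 3 * (1 - F2 θ)

lemma one_sub_F3 (θ : ℝ × ℝ) (t : ℝ) : 1 - F3 (θ, t) = Dd (bb θ) t := by
  unfold F3 Dd bb F2; ring

def Good (θ : ℝ × ℝ) : Prop :=
  (θ.1 ∈ I1 ∧ |Real.cos θ.1| < 1) ∧ (θ.2 ∈ I1 ∧ |Real.cos θ.2| < 1)

lemma bb_pos {θ : ℝ × ℝ} (h : Good θ) : 0 < bb θ := by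
  have h1 := (abs_lt.mp h.1.2).2
  have h2 := (abs_lt.mp h.2.2).2
  unfold bb F2; linarith

lemma absF3_lt {θ : ℝ × ℝ} (h : Good θ) (t : ℝ) : |F3 (θ, t)| < 1 := by
  have h1 := abs_lt.mp h.1.2
  have h2 := abs_lt.mp h.2.2
  have h3 := Real.neg_one_le_cos t
  have h4 := Real.cos_le_one t
  rw [abs_lt]; unfold F3
  constructor <;> [skip; skip] <;> simp only [Prod.fst, Prod.snd] <;> nlinarith

lemma good_ne_zero {θ : ℝ × ℝ} (h : Good θ) : θ.1 ≠ 0 ∧ θ.2 ≠ 0 := by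
  constructor
  · intro h0; have := h.1.2; rw [h0] at this; simp at this
  · intro h0; have := h.2.2; rw [h0] at this; simp at this

lemma ae1_mem : ∀ᵐ t ∂μ1, t ∈ I1 := by
  rw [μ1]; exact ae_restrict_mem measurableSet_Icc

lemma ae1 : ∀ᵐ t ∂μ1, t ∈ I1 ∧ |Real.cos t| < 1 := by
  have h0 : ∀ᵐ t ∂μ1, t ∉ ({-π, 0, π} : Set ℝ) := by
    rw [μ1]
    refine ae_restrict_of_ae ?_
    have hz : volume ({-π, 0, π} : Set ℝ) = 0 :=
      (Set.toFinite _).countable.measure_zero _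
    rw [ae_iff]
    have hset : {a : ℝ | ¬ a ∉ ({-π, 0, π} : Set ℝ)} = ({-π, 0, π} : Set ℝ) := by
      ext t; simp only [Set.mem_setOf_eq, not_not]
    rw [hset]; exact hz
  filter_upwards [h0, ae1_mem] with t ht htI
  refine ⟨htI, ?_⟩
  simp only [Set.mem_insert_iff, Set.mem_singleton_iff, not_or] at ht
  obtain ⟨h1, h2, h3⟩ := ht
  rw [I1, Set.mem_Icc] at htI
  have hpi := Real.pi_pos
  rw [abs_lt]
  constructor
  · have htlt : -π < t := lt_of_le_of_ne htI.1 (Ne.symm h1)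
    have htlt2 : t < π := lt_of_le_of_ne htI.2 h3
    have hhalf : 0 < Real.cos (t / 2) :=
      Real.cos_pos_of_mem_Ioo ⟨by linarith, by linarith⟩
    have hch := Real.cos_half htI.1 htI.2
    rw [hch] at hhalf
    have := Real.sqrt_pos.mp hhalf
    linarith
  · rcases (Real.cos_le_one t).lt_or_eq with h | h
    · exact h
    · exact absurd ((Real.cos_eq_one_iff_of_lt_of_lt (by linarith) (by linarith)).mp h) h2

lemma prod_null_fst {A : Set ℝ} (h0 : μ1 A = 0) : μ2 (A ×ˢ (Set.univ : Set ℝ)) = 0 := by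
  rw [μ2, Measure.prod_prod, h0, zero_mul]

lemma prod_null_snd {A : Set ℝ} (h0 : μ1 A = 0) : μ2 ((Set.univ : Set ℝ) ×ˢ A) = 0 := by
  rw [μ2, Measure.prod_prod, h0, mul_zero]

lemma ae2_good : ∀ᵐ θ ∂μ2, Good θ := by
  set A : Set ℝ := {t | ¬ (t ∈ I1 ∧ |Real.cos t| < 1)} with hA
  have hA0 : μ1 A = 0 := by
    have h := ae1
    rw [ae_iff] at h
    exact h
  rw [ae_iff]
  refine measure_mono_null ?_
    (measure_union_null (prod_null_fst hA0) (prod_null_snd hA0))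
  intro θ hθ
  simp only [Set.mem_setOf_eq, Good, not_and_or] at hθ
  rcases hθ with h | h
  · exact Or.inl (Set.mem_prod.mpr
      ⟨by simp only [hA, Set.mem_setOf_eq, not_and_or]; exact h, Set.mem_univ _⟩)
  · exact Or.inr (Set.mem_prod.mpr
      ⟨Set.mem_univ _, by simp only [hA, Set.mem_setOf_eq, not_and_or]; exact h⟩)

lemma integral_odd_zero (g : ℝ → ℝ) (hg : Continuous g) (hodd : ∀ t, g (-t) = - g t) :
    ∫ t, g t ∂μ1 = 0 := by
  have hpi := Real.pi_pos
  have hIcc : ∫ t, g t ∂μ1 = ∫ t in (-π)..π, g t := by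
    rw [μ1, I1, intervalIntegral.integral_of_le (by linarith), integral_Icc_eq_integral_Ioc]
  rw [hIcc]
  have h1 : ∫ x in (0:ℝ)..π, g (-x) = ∫ x in (-π)..(0:ℝ), g x := by
    rw [intervalIntegral.integral_comp_neg g (a := (0:ℝ)) (b := π)]
    norm_num
  have h2 : ∫ x in (0:ℝ)..π, g (-x) = - ∫ x in (0:ℝ)..π, g x := by
    have heq : ∀ x, g (-x) = - g x := hodd
    simp only [heq]
    exact intervalIntegral.integral_neg
  have hi1 : IntervalIntegrable g volume (-π) 0 := hg.intervalIntegrable (-π) 0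
  have hi2 : IntervalIntegrable g volume 0 π := hg.intervalIntegrable 0 π
  have h3 := intervalIntegral.integral_add_adjacent_intervals hi1 hi2
  linarith [h3, h1, h2]

lemma cos_natAbs (k : ℤ) (t : ℝ) :
    Real.cos ((k.natAbs : ℝ) * t) = Real.cos ((k : ℝ) * t) := by
  have h : ((k.natAbs : ℝ)) = |(k : ℝ)| := by
    rw [← Int.cast_natCast, ← Int.abs_eq_natAbs, Int.cast_abs]
  rw [h]
  rcases abs_cases ((k : ℝ)) with ⟨he, _⟩ | ⟨he, _⟩
  · rw [he]
  · rw [he, neg_mul, Real.cos_neg]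

noncomputable def SF (M : ℕ) (ξ : (ℝ × ℝ) × ℝ) : ℝ := ∑ n ∈ Finset.range M, F3 ξ ^ n

lemma continuous_SF (M : ℕ) : Continuous (SF M) := by
  unfold SF
  exact continuous_finset_sum _ (fun n _ => continuous_F3.pow n)

lemma abs_SF_le (M : ℕ) (ξ : (ℝ × ℝ) × ℝ) : |SF M ξ| ≤ M := by
  unfold SF
  calc |∑ n ∈ Finset.range M, F3 ξ ^ n| ≤ ∑ n ∈ Finset.range M, |F3 ξ ^ n| :=
        Finset.abs_sum_le_sum_abs _ _
    _ ≤ ∑ n ∈ Finset.range M, 1 := by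
        apply Finset.sum_le_sum
        intro n _
        rw [abs_pow]
        exact pow_le_one₀ (abs_nonneg _) (abs_F3_le ξ)
    _ = M := by simp

lemma abs_SF_le_D {θ : ℝ × ℝ} (h : Good θ) (M : ℕ) (t : ℝ) :
    |SF M (θ, t)| ≤ 2 / Dd (bb θ) t := by
  have hb := bb_pos h
  have hF := absF3_lt h t
  have hne : F3 (θ, t) ≠ 1 := by have := (abs_lt.mp hF).2; linarith
  have hD := Dd_pos hb t
  have h1F := one_sub_F3 θ t
  rw [SF, geom_sum_eq hne, abs_div]
  rw [div_le_div_iff₀ (abs_pos.mpr (sub_ne_zero.mpr hne)) hD]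
  have habs1 : |F3 (θ, t) - 1| = Dd (bb θ) t := by
    rw [abs_sub_comm, abs_of_pos (by linarith [h1F] : (0:ℝ) < 1 - F3 (θ, t)), h1F]
  rw [habs1]
  have : |F3 (θ, t) ^ M - 1| ≤ 2 := by
    calc |F3 (θ, t) ^ M - 1| ≤ |F3 (θ, t) ^ M| + 1 := by
          calc _ ≤ |F3 (θ, t) ^ M| + |(1:ℝ)| := abs_sub _ _
            _ = |F3 (θ, t) ^ M| + 1 := by norm_num
      _ ≤ 2 := by
          rw [abs_pow]
          have hp : |F3 (θ, t)| ^ M ≤ 1 := pow_le_one₀ (abs_nonneg _) (abs_F3_le (θ, t))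
          linarith
  nlinarith [hD.le, this, abs_nonneg (F3 (θ,t) ^ M - 1)]

noncomputable def GM (k : ℤ) (M : ℕ) (θ : ℝ × ℝ) : ℝ :=
  ∫ t, SF M (θ, t) * Real.cos (k * t) ∂μ1

end RodAux4

namespace RodAux5
open RodAux RodAux2 RodAux3 RodAux4

lemma integrable_SF_cos (M : ℕ) (w : ℤ × ℤ) (k : ℤ) :
    Integrable (fun ξ : (ℝ × ℝ) × ℝ => SF M ξ * Real.cos (e3 (w, k) ξ)) μ3 := by
  refine integrable_bdd' ?_ (C := M) ?_
  · exact ((continuous_SF M).mul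
      (Real.continuous_cos.comp (continuous_e3 (w, k)))).aestronglyMeasurable
  · intro ξ
    rw [abs_mul]
    calc |SF M ξ| * |Real.cos (e3 (w, k) ξ)| ≤ M * 1 :=
          mul_le_mul (abs_SF_le M ξ) (Real.abs_cos_le_one _) (abs_nonneg _) (by positivity)
      _ = M := mul_one _

lemma e3_eval (w : ℤ × ℤ) (k : ℤ) (θ : ℝ × ℝ) (t : ℝ) :
    e3 (w, k) (θ, t) = e2 w θ + k * t := rfl

lemma hps (w : ℤ × ℤ) (k : ℤ) (M : ℕ) :
    ∑ n ∈ Finset.range M, srw3 n (w, k)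
      = ((2 * π) ^ 3)⁻¹ * ∫ θ, Real.cos (e2 w θ) * GM k M θ ∂μ2 := by
  have h1 : ∑ n ∈ Finset.range M, srw3 n (w, k)
      = ((2 * π) ^ 3)⁻¹ * ∫ ξ, SF M ξ * Real.cos (e3 (w, k) ξ) ∂μ3 := by
    rw [Finset.sum_congr rfl (fun n _ => srw3_fourier n (w, k)), ← Finset.mul_sum,
      ← integral_finset_sum _ (fun n _ => integrable_F3_cos n (w, k))]
    congr 1
    apply integral_congr_ae
    filter_upwards with ξ
    rw [SF, Finset.sum_mul]
  have h2 : ∫ ξ, SF M ξ * Real.cos (e3 (w, k) ξ) ∂μ3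
      = ∫ θ, (∫ t, SF M (θ, t) * Real.cos (e3 (w, k) (θ, t)) ∂μ1) ∂μ2 := by
    rw [μ3]
    exact integral_prod _ (by rw [← μ3]; exact integrable_SF_cos M w k)
  have h3 : ∀ θ : ℝ × ℝ,
      (∫ t, SF M (θ, t) * Real.cos (e3 (w, k) (θ, t)) ∂μ1)
        = Real.cos (e2 w θ) * GM k M θ := by
    intro θ
    have hexp : ∀ t : ℝ, SF M (θ, t) * Real.cos (e3 (w, k) (θ, t))
        = Real.cos (e2 w θ) * (SF M (θ, t) * Real.cos (k * t))
          - Real.sin (e2 w θ) * (SF M (θ, t) * Real.sin (k * t)) := by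
      intro t
      rw [e3_eval, Real.cos_add]
      ring
    have hcont1 : Continuous (fun t : ℝ => SF M (θ, t) * Real.cos (k * t)) :=
      ((continuous_SF M).comp (by fun_prop)).mul (by fun_prop)
    have hcont2 : Continuous (fun t : ℝ => SF M (θ, t) * Real.sin (k * t)) :=
      ((continuous_SF M).comp (by fun_prop)).mul (by fun_prop)
    have hb1 : ∀ t : ℝ, |SF M (θ, t) * Real.cos (k * t)| ≤ (M : ℝ) := by
      intro t
      rw [abs_mul]
      calc |SF M (θ, t)| * |Real.cos (k * t)| ≤ M * 1 :=
            mul_le_mul (abs_SF_le M _) (Real.abs_cos_le_one _) (abs_nonneg _) (by positivity)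
        _ = M := mul_one _
    have hb2 : ∀ t : ℝ, |SF M (θ, t) * Real.sin (k * t)| ≤ (M : ℝ) := by
      intro t
      rw [abs_mul]
      calc |SF M (θ, t)| * |Real.sin (k * t)| ≤ M * 1 :=
            mul_le_mul (abs_SF_le M _) (Real.abs_sin_le_one _) (abs_nonneg _) (by positivity)
        _ = M := mul_one _
    have hi1 : Integrable (fun t => Real.cos (e2 w θ) * (SF M (θ, t) * Real.cos (k * t))) μ1 :=
      (integrable_bdd' hcont1.aestronglyMeasurable hb1).const_mul _
    have hi2 : Integrable (fun t => Real.sin (e2 w θ) * (SF M (θ, t) * Real.sin (k * t))) μ1 :=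
      (integrable_bdd' hcont2.aestronglyMeasurable hb2).const_mul _
    rw [integral_congr_ae (Eventually.of_forall hexp), integral_sub hi1 hi2,
      integral_const_mul, integral_const_mul]
    have hodd : ∫ t, SF M (θ, t) * Real.sin (k * t) ∂μ1 = 0 := by
      apply integral_odd_zero _ hcont2
      intro t
      have hSFe : SF M (θ, -t) = SF M (θ, t) := by
        unfold SF F3
        simp [Real.cos_neg]
      rw [hSFe, show (k : ℝ) * -t = -((k : ℝ) * t) by ring, Real.sin_neg]
      ring
    rw [hodd, mul_zero, sub_zero, GM]
  rw [h1, h2]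
  congr 1
  exact integral_congr_ae (Eventually.of_forall h3)

end RodAux5

namespace RodAux6
open RodAux RodAux2 RodAux3 RodAux4 RodAux5

lemma jordan {t : ℝ} (ht : t ∈ I1) : 2 * t ^ 2 ≤ π ^ 2 * (1 - Real.cos t) := by
  rw [I1, Set.mem_Icc] at ht
  have habs : |t| ≤ π := abs_le.mpr ht
  have h := Real.cos_le_one_sub_mul_cos_sq habs
  have hp2 : (0:ℝ) < π ^ 2 := by positivity
  have h2 : π ^ 2 * Real.cos t ≤ π ^ 2 * (1 - 2 / π ^ 2 * t ^ 2) :=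
    mul_le_mul_of_nonneg_left h hp2.le
  have h3 : π ^ 2 * (1 - 2 / π ^ 2 * t ^ 2) = π ^ 2 - 2 * t ^ 2 := by
    field_simp
  nlinarith [h2, h3]

lemma bb_lower {θ : ℝ × ℝ} (h : Good θ) :
    2 * (θ.1 ^ 2 + θ.2 ^ 2) ≤ 3 * π ^ 2 * bb θ := by
  have h1 := jordan h.1.1
  have h2 := jordan h.2.1
  unfold bb F2
  nlinarith [h1, h2]

lemma GM_tendsto (k : ℤ) {θ : ℝ × ℝ} (h : Good θ) :
    Filter.Tendsto (fun M => GM k M θ) Filter.atTop (nhds (II (bb θ) k.natAbs)) := by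
  have hb := bb_pos h
  have hIIeq : II (bb θ) k.natAbs
      = ∫ t, (1 - F3 (θ, t))⁻¹ * Real.cos ((k : ℝ) * t) ∂μ1 := by
    rw [II]
    apply integral_congr_ae
    filter_upwards with t
    rw [one_sub_F3, cos_natAbs, div_eq_mul_inv, mul_comm]
  rw [hIIeq]
  unfold GM
  apply tendsto_integral_of_dominated_convergence (bound := fun _ => 2 / bb θ)
  · intro M
    exact (((continuous_SF M).comp (by fun_prop : Continuous (fun t : ℝ => ((θ, t) : (ℝ × ℝ) × ℝ)))).mul
      (by fun_prop : Continuous (fun t : ℝ => Real.cos ((k : ℝ) * t)))).aestronglyMeasurable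
  · exact integrable_const _
  · intro M
    filter_upwards with t
    have h1 := abs_SF_le_D h M t
    have hD := Dd_pos hb t
    rw [Real.norm_eq_abs, abs_mul]
    calc |SF M (θ, t)| * |Real.cos ((k:ℝ) * t)| ≤ (2 / Dd (bb θ) t) * 1 :=
          mul_le_mul h1 (Real.abs_cos_le_one _) (abs_nonneg _) (by positivity)
      _ = 2 / Dd (bb θ) t := mul_one _
      _ ≤ 2 / bb θ := by
          apply div_le_div_of_nonneg_left (by norm_num) hb (Dd_ge (bb θ) t)
  · filter_upwards with t
    have hF := absF3_lt h t
    have hgeo := (hasSum_geometric_of_abs_lt_one hF).tendsto_sum_nat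
    have := hgeo.mul_const (Real.cos ((k : ℝ) * t))
    exact this

lemma bound_ss {θ : ℝ × ℝ} (h : Good θ) :
    4 * π / ss (bb θ) ≤ 6 * π ^ 2 * ((Real.sqrt |θ.1|)⁻¹ * (Real.sqrt |θ.2|)⁻¹) := by
  have hb := bb_pos h
  have hss := ss_pos hb
  have hpi := Real.pi_pos
  have hne := good_ne_zero h
  have h1 : (0:ℝ) < |θ.1| := abs_pos.mpr hne.1
  have h2 : (0:ℝ) < |θ.2| := abs_pos.mpr hne.2
  have hsq1 : (0:ℝ) < Real.sqrt |θ.1| := Real.sqrt_pos.mpr h1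
  have hsq2 : (0:ℝ) < Real.sqrt |θ.2| := Real.sqrt_pos.mpr h2
  -- key : (2 / (3 * π)) * (sqrt |θ.1| * sqrt |θ.2|) ≤ ss (bb θ)
  have hkey : 2 / (3 * π) * (Real.sqrt |θ.1| * Real.sqrt |θ.2|) ≤ ss (bb θ) := by
    have hlhs : 2 / (3 * π) * (Real.sqrt |θ.1| * Real.sqrt |θ.2|)
        = Real.sqrt (4 / (9 * π ^ 2) * (|θ.1| * |θ.2|)) := by
      rw [Real.sqrt_mul (by positivity), Real.sqrt_mul (abs_nonneg _)]
      rw [show (4 / (9 * π ^ 2) : ℝ) = (2 / (3 * π)) ^ 2 by ring]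
      rw [Real.sqrt_sq (by positivity)]
    rw [hlhs, ss]
    apply Real.sqrt_le_sqrt
    have hbl := bb_lower h
    have habs : 2 * (|θ.1| * |θ.2|) ≤ θ.1 ^ 2 + θ.2 ^ 2 := by
      nlinarith [sq_nonneg (|θ.1| - |θ.2|), sq_abs θ.1, sq_abs θ.2]
    rw [div_mul_eq_mul_div, div_le_iff₀ (by positivity : (0:ℝ) < 9 * π ^ 2)]
    nlinarith [sq_nonneg (bb θ), hb.le, hbl, habs]
  have h5 : 2 / (3 * π) ≤ ss (bb θ) / (Real.sqrt |θ.1| * Real.sqrt |θ.2|) := by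
    rw [le_div_iff₀ (by positivity)]
    linarith [hkey]
  have hrw : 6 * π ^ 2 * ((Real.sqrt |θ.1|)⁻¹ * (Real.sqrt |θ.2|)⁻¹) * ss (bb θ)
      = 6 * π ^ 2 * (ss (bb θ) / (Real.sqrt |θ.1| * Real.sqrt |θ.2|)) := by
    field_simp
  rw [div_le_iff₀ hss, hrw]
  calc 4 * π = 6 * π ^ 2 * (2 / (3 * π)) := by field_simp; ring
    _ ≤ 6 * π ^ 2 * (ss (bb θ) / (Real.sqrt |θ.1| * Real.sqrt |θ.2|)) := by
        apply mul_le_mul_of_nonneg_left h5 (by positivity)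

lemma integrable_sqrt_inv : Integrable (fun t : ℝ => (Real.sqrt |t|)⁻¹) μ1 := by
  rw [μ1, I1]
  have hpi := Real.pi_pos
  rw [← IntegrableOn, integrableOn_Icc_iff_integrableOn_Ioc]
  have hint : IntervalIntegrable (fun t : ℝ => (Real.sqrt |t|)⁻¹) volume (-π) π := by
    have hpos : IntervalIntegrable (fun t : ℝ => (Real.sqrt |t|)⁻¹) volume 0 π := by
      have hr : IntervalIntegrable (fun t : ℝ => t ^ (-(1/2) : ℝ)) volume 0 π :=
        intervalIntegral.intervalIntegrable_rpow' (by norm_num)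
      rw [intervalIntegrable_iff] at hr ⊢
      apply hr.congr_fun ?_ measurableSet_uIoc
      intro t ht
      rw [Set.uIoc_of_le hpi.le] at ht
      have ht0 : 0 < t := ht.1
      show t ^ (-(1/2) : ℝ) = (Real.sqrt |t|)⁻¹
      rw [abs_of_pos ht0, Real.rpow_neg ht0.le, Real.sqrt_eq_rpow]
    have hneg : IntervalIntegrable (fun t : ℝ => (Real.sqrt |t|)⁻¹) volume (-π) 0 := by
      have h' := (IntervalIntegrable.iff_comp_neg).mp hpos
      simp only [abs_neg, neg_zero] at h'
      exact h'.symm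
    exact hneg.trans hpos
  exact hint.1

end RodAux6

namespace RodAux7
open RodAux RodAux2 RodAux3 RodAux4 RodAux5 RodAux6 Filter

noncomputable def gB (θ : ℝ × ℝ) : ℝ :=
  6 * π ^ 2 * ((Real.sqrt |θ.1|)⁻¹ * (Real.sqrt |θ.2|)⁻¹)

lemma integrable_gB : Integrable gB μ2 := by
  have h2 : Integrable (fun z : ℝ × ℝ => (Real.sqrt |z.1|)⁻¹ * (Real.sqrt |z.2|)⁻¹)
      (μ1.prod μ1) := integrable_sqrt_inv.mul_prod integrable_sqrt_inv
  rw [← μ2] at h2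
  exact h2.const_mul _

lemma aesm_GM (k : ℤ) (M : ℕ) : AEStronglyMeasurable (GM k M) μ2 := by
  have hc : Continuous (fun p : (ℝ × ℝ) × ℝ => SF M p * Real.cos (k * p.2)) := by
    exact (continuous_SF M).mul (by fun_prop)
  exact (hc.stronglyMeasurable.integral_prod_right').aestronglyMeasurable

lemma GM_bound {θ : ℝ × ℝ} (h : Good θ) (k : ℤ) (M : ℕ) :
    |GM k M θ| ≤ 4 * π / ss (bb θ) := by
  have hb := bb_pos h
  have h0 := norm_integral_le_integral_norm (μ := μ1)
    (f := fun t => SF M (θ, t) * Real.cos ((k : ℝ) * t))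
  simp only [Real.norm_eq_abs] at h0
  rw [GM]
  refine le_trans h0 ?_
  have int1 : Integrable (fun t => |SF M (θ, t) * Real.cos ((k : ℝ) * t)|) μ1 := by
    refine Integrable.abs ?_
    refine integrable_bdd' ?_ (C := M) ?_
    · exact (((continuous_SF M).comp
        (by fun_prop : Continuous (fun t : ℝ => ((θ, t) : (ℝ × ℝ) × ℝ)))).mul
        (by fun_prop)).aestronglyMeasurable
    · intro t
      rw [abs_mul]
      calc |SF M (θ, t)| * |Real.cos ((k:ℝ) * t)| ≤ M * 1 :=
            mul_le_mul (abs_SF_le M _) (Real.abs_cos_le_one _) (abs_nonneg _) (by positivity)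
        _ = M := mul_one _
  have int2 : Integrable (fun t => 2 * (Dd (bb θ) t)⁻¹) μ1 :=
    (integrable_invD hb).const_mul 2
  have hstep : ∫ t, |SF M (θ, t) * Real.cos ((k:ℝ) * t)| ∂μ1
      ≤ ∫ t, 2 * (Dd (bb θ) t)⁻¹ ∂μ1 := by
    apply integral_mono int1 int2
    intro t
    have hD := Dd_pos hb t
    have hS := abs_SF_le_D h M t
    show |SF M (θ, t) * Real.cos ((k:ℝ) * t)| ≤ 2 * (Dd (bb θ) t)⁻¹
    rw [abs_mul]
    calc |SF M (θ, t)| * |Real.cos ((k:ℝ) * t)| ≤ (2 / Dd (bb θ) t) * 1 :=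
          mul_le_mul hS (Real.abs_cos_le_one _) (abs_nonneg _) (by positivity)
      _ = 2 * (Dd (bb θ) t)⁻¹ := by rw [mul_one, div_eq_mul_inv]
  refine hstep.trans ?_
  rw [integral_const_mul, ← II_zero_eq, II_closed hb 0, pow_zero, mul_one]
  apply le_of_eq
  ring

lemma green3_rep (w : ℤ × ℤ) (k : ℤ) :
    Summable (fun n => srw3 n (w, k)) ∧
      green3 (w, k) = ((2 * π) ^ 3)⁻¹ *
        ∫ θ, Real.cos (e2 w θ) * (2 * π / ss (bb θ) * rr (bb θ) ^ k.natAbs) ∂μ2 := by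
  set L := ((2 * π) ^ 3)⁻¹ *
    ∫ θ, Real.cos (e2 w θ) * (2 * π / ss (bb θ) * rr (bb θ) ^ k.natAbs) ∂μ2 with hL
  have hT : Tendsto (fun M => ∑ n ∈ Finset.range M, srw3 n (w, k)) atTop (nhds L) := by
    have hfun : (fun M => ∑ n ∈ Finset.range M, srw3 n (w, k))
        = fun M => ((2 * π) ^ 3)⁻¹ * ∫ θ, Real.cos (e2 w θ) * GM k M θ ∂μ2 :=
      funext (hps w k)
    rw [hfun, hL]
    apply Tendsto.const_mul
    apply tendsto_integral_of_dominated_convergence gB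
    · intro M
      exact (Real.continuous_cos.comp (continuous_e2 w)).aestronglyMeasurable.mul (aesm_GM k M)
    · exact integrable_gB
    · intro M
      filter_upwards [ae2_good] with θ hθ
      rw [Real.norm_eq_abs, abs_mul]
      have hss := ss_pos (bb_pos hθ)
      calc |Real.cos (e2 w θ)| * |GM k M θ| ≤ 1 * (4 * π / ss (bb θ)) :=
            mul_le_mul (Real.abs_cos_le_one _) (GM_bound hθ k M) (abs_nonneg _) (by norm_num)
        _ = 4 * π / ss (bb θ) := one_mul _
        _ ≤ gB θ := bound_ss hθ
    · filter_upwards [ae2_good] with θ hθ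
      have h1 := (GM_tendsto k hθ).const_mul (Real.cos (e2 w θ))
      rw [II_closed (bb_pos hθ) k.natAbs] at h1
      exact h1
  have hnn : ∀ n, 0 ≤ srw3 n (w, k) := fun n => srw3_nonneg n _
  have hmono : Monotone (fun M => ∑ n ∈ Finset.range M, srw3 n (w, k)) := by
    intro a b hab
    exact Finset.sum_le_sum_of_subset_of_nonneg (Finset.range_subset_range.mpr hab)
      (fun i _ _ => hnn i)
  have hle : ∀ M, ∑ n ∈ Finset.range M, srw3 n (w, k) ≤ L :=
    fun M => hmono.ge_of_tendsto hT M
  have hsum := summable_of_sum_range_le hnn hle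
  exact ⟨hsum, tendsto_nhds_unique hsum.hasSum.tendsto_sum_nat hT⟩

end RodAux7

namespace RodAux8
open RodAux RodAux2 RodAux3 RodAux4 RodAux5 RodAux6 RodAux7 Filter

lemma absF2_lt {θ : ℝ × ℝ} (h : Good θ) : |F2 θ| < 1 := by
  have h1 := abs_lt.mp h.1.2
  have h2 := abs_lt.mp h.2.2
  rw [abs_lt]; unfold F2
  constructor <;> nlinarith [h1.1, h1.2, h2.1, h2.2]

lemma e2_zero (θ : ℝ × ℝ) : e2 (0 : ℤ × ℤ) θ = 0 := by simp [e2]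

lemma one_sub_cos_le (y : ℤ × ℤ) (θ : ℝ × ℝ) :
    1 - Real.cos (e2 y θ) ≤ ((y.1 : ℝ) ^ 2 + (y.2 : ℝ) ^ 2) * (θ.1 ^ 2 + θ.2 ^ 2) := by
  have h1 := Real.one_sub_sq_div_two_le_cos (x := e2 y θ)
  have hcs : (e2 y θ) ^ 2 ≤ ((y.1 : ℝ) ^ 2 + (y.2 : ℝ) ^ 2) * (θ.1 ^ 2 + θ.2 ^ 2) := by
    unfold e2
    nlinarith [sq_nonneg ((y.1 : ℝ) * θ.2 - (y.2 : ℝ) * θ.1)]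
  nlinarith [h1, hcs]

lemma one_sub_F2_pos {θ : ℝ × ℝ} (h : Good θ) : 0 < 1 - F2 θ := by
  have := absF2_lt h; rw [abs_lt] at this; linarith [this.2]

lemma one_sub_F2_ge {θ : ℝ × ℝ} (h : Good θ) :
    (θ.1 ^ 2 + θ.2 ^ 2) / π ^ 2 ≤ 1 - F2 θ := by
  have hbl := bb_lower h
  have hb : 1 - F2 θ = 3 / 2 * bb θ := by unfold bb; ring
  have hpi : (0:ℝ) < π ^ 2 := by positivity
  rw [hb, div_le_iff₀ hpi]
  nlinarith [hbl]

noncomputable def SG (m : ℕ) (θ : ℝ × ℝ) : ℝ := ∑ j ∈ Finset.range m, F2 θ ^ j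

lemma abs_SG_le {θ : ℝ × ℝ} (h : Good θ) (m : ℕ) : |SG m θ| ≤ 2 / (1 - F2 θ) := by
  have hF := absF2_lt h
  have hne : F2 θ ≠ 1 := by have := (abs_lt.mp hF).2; linarith
  have hpos := one_sub_F2_pos h
  rw [SG, geom_sum_eq hne, abs_div]
  rw [div_le_div_iff₀ (abs_pos.mpr (sub_ne_zero.mpr hne)) hpos]
  have habs1 : |F2 θ - 1| = 1 - F2 θ := by
    rw [abs_sub_comm, abs_of_pos hpos]
  rw [habs1]
  have hnum : |F2 θ ^ m - 1| ≤ 2 := by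
    calc |F2 θ ^ m - 1| ≤ |F2 θ ^ m| + |(1:ℝ)| := abs_sub _ _
      _ ≤ 2 := by
          rw [abs_pow]
          have := pow_le_one₀ (n := m) (abs_nonneg (F2 θ)) (abs_F2_le θ)
          simp only [abs_one]
          linarith
  nlinarith [hpos.le, hnum, abs_nonneg (F2 θ ^ m - 1)]

lemma aker_integrand_bound (y : ℤ × ℤ) {θ : ℝ × ℝ} (h : Good θ) (m : ℕ) :
    |SG m θ * (1 - Real.cos (e2 y θ))|
      ≤ 2 * π ^ 2 * (((y.1 : ℝ)) ^ 2 + ((y.2 : ℝ)) ^ 2) := by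
  have hne0 := good_ne_zero h
  have hs : (0:ℝ) < θ.1 ^ 2 + θ.2 ^ 2 := by
    have h1 : (0:ℝ) < |θ.1| := abs_pos.mpr hne0.1
    nlinarith [sq_nonneg θ.2, mul_pos h1 h1, sq_abs θ.1]
  have hpos := one_sub_F2_pos h
  have hc1 : 0 ≤ 1 - Real.cos (e2 y θ) := by linarith [Real.cos_le_one (e2 y θ)]
  have hSG := abs_SG_le h m
  have hF2 := one_sub_F2_ge h
  have hcos := one_sub_cos_le y θ
  have hpi : (0:ℝ) < π ^ 2 := by positivity
  set K := ((y.1 : ℝ)) ^ 2 + ((y.2 : ℝ)) ^ 2 with hK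
  have hK0 : 0 ≤ K := by positivity
  rw [abs_mul, abs_of_nonneg hc1]
  calc |SG m θ| * (1 - Real.cos (e2 y θ)) ≤ (2 / (1 - F2 θ)) * (K * (θ.1 ^ 2 + θ.2 ^ 2)) := by
        apply mul_le_mul hSG hcos hc1 (by positivity)
    _ ≤ 2 * π ^ 2 * K := by
        rw [div_mul_eq_mul_div, div_le_iff₀ hpos]
        have h2 : (θ.1 ^ 2 + θ.2 ^ 2) ≤ π ^ 2 * (1 - F2 θ) := by
          rw [div_le_iff₀ hpi] at hF2; linarith
        nlinarith [h2, hK0, hs]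

lemma aker_tendsto (y : ℤ × ℤ) :
    Tendsto (fun n : ℕ => ∑ j ∈ Finset.range (n + 1), (srw2 j 0 - srw2 j y)) atTop
      (nhds (((2 * π) ^ 2)⁻¹ * ∫ θ, (1 - Real.cos (e2 y θ)) * (1 - F2 θ)⁻¹ ∂μ2)) := by
  have hps2 : ∀ m : ℕ, ∑ j ∈ Finset.range m, (srw2 j 0 - srw2 j y)
      = ((2 * π) ^ 2)⁻¹ * ∫ θ, SG m θ * (1 - Real.cos (e2 y θ)) ∂μ2 := by
    intro m
    have hterm : ∀ j : ℕ, srw2 j 0 - srw2 j y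
        = ((2 * π) ^ 2)⁻¹ * ∫ θ, F2 θ ^ j * (1 - Real.cos (e2 y θ)) ∂μ2 := by
      intro j
      rw [srw2_fourier j 0, srw2_fourier j y, ← mul_sub]
      congr 1
      rw [← integral_sub (integrable_F2_cos j 0) (integrable_F2_cos j y)]
      apply integral_congr_ae
      filter_upwards with θ
      show F2 θ ^ j * Real.cos (e2 (0 : ℤ × ℤ) θ) - F2 θ ^ j * Real.cos (e2 y θ)
        = F2 θ ^ j * (1 - Real.cos (e2 y θ))
      rw [e2_zero, Real.cos_zero]
      ring
    rw [Finset.sum_congr rfl (fun j _ => hterm j), ← Finset.mul_sum]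
    congr 1
    have hint : ∀ j ∈ Finset.range m,
        Integrable (fun θ => F2 θ ^ j * (1 - Real.cos (e2 y θ))) μ2 := by
      intro j _
      refine ((integrable_F2_cos j 0).sub (integrable_F2_cos j y)).congr ?_
      filter_upwards with θ
      show F2 θ ^ j * Real.cos (e2 (0 : ℤ × ℤ) θ) - F2 θ ^ j * Real.cos (e2 y θ)
        = F2 θ ^ j * (1 - Real.cos (e2 y θ))
      rw [e2_zero, Real.cos_zero]
      ring
    rw [← integral_finset_sum _ hint]
    apply integral_congr_ae
    filter_upwards with θ
    rw [SG, Finset.sum_mul]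
  have hT : Tendsto (fun m : ℕ => ∑ j ∈ Finset.range m, (srw2 j 0 - srw2 j y)) atTop
      (nhds (((2 * π) ^ 2)⁻¹ * ∫ θ, (1 - Real.cos (e2 y θ)) * (1 - F2 θ)⁻¹ ∂μ2)) := by
    have hfun : (fun m : ℕ => ∑ j ∈ Finset.range m, (srw2 j 0 - srw2 j y))
        = fun m => ((2 * π) ^ 2)⁻¹ * ∫ θ, SG m θ * (1 - Real.cos (e2 y θ)) ∂μ2 :=
      funext hps2
    rw [hfun]
    apply Tendsto.const_mul
    apply tendsto_integral_of_dominated_convergence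
      (bound := fun _ => 2 * π ^ 2 * (((y.1 : ℝ)) ^ 2 + ((y.2 : ℝ)) ^ 2))
    · intro m
      have : Continuous (fun θ => SG m θ * (1 - Real.cos (e2 y θ))) := by
        apply Continuous.mul
        · unfold SG
          exact continuous_finset_sum _ (fun j _ => continuous_F2.pow j)
        · exact (continuous_const.sub (Real.continuous_cos.comp (continuous_e2 y)))
      exact this.aestronglyMeasurable
    · exact integrable_const _
    · intro m
      filter_upwards [ae2_good] with θ hθ
      rw [Real.norm_eq_abs]
      exact aker_integrand_bound y hθ m
    · filter_upwards [ae2_good] with θ hθ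
      have hgeo := (hasSum_geometric_of_abs_lt_one (absF2_lt hθ)).tendsto_sum_nat
      have := hgeo.mul_const (1 - Real.cos (e2 y θ))
      -- limit: (1 - F2 θ)⁻¹ * (1 - cos ...) vs (1 - cos ...) * (1 - F2 θ)⁻¹
      rw [show (1 - Real.cos (e2 y θ)) * (1 - F2 θ)⁻¹
        = (1 - F2 θ)⁻¹ * (1 - Real.cos (e2 y θ)) from mul_comm _ _]
      exact this
  exact hT.comp (tendsto_add_atTop_nat 1)

lemma aker_eq (y : ℤ × ℤ) :
    aker y = ((2 * π) ^ 2)⁻¹ * ∫ θ, (1 - Real.cos (e2 y θ)) * (1 - F2 θ)⁻¹ ∂μ2 :=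
  (aker_tendsto y).limUnder_eq

end RodAux8

namespace RodAux9
open RodAux RodAux2 RodAux3 RodAux4 RodAux5 RodAux6 RodAux7 RodAux8 Filter

lemma TM {x : ℝ} (hx : x ≠ 1) (M : ℕ) :
    ∑ k ∈ Finset.Icc (-(M : ℤ)) (M : ℤ), x ^ k.natAbs
      = (1 + x) / (1 - x) - 2 * x ^ (M + 1) / (1 - x) := by
  have hne : 1 - x ≠ 0 := sub_ne_zero.mpr (Ne.symm hx)
  induction M with
  | zero =>
    simp only [Nat.cast_zero, neg_zero, Finset.Icc_self, Finset.sum_singleton,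
      Int.natAbs_zero, pow_zero, pow_one]
    field_simp
    ring
  | succ M ih =>
    have hins : Finset.Icc (-(M + 1 : ℕ) : ℤ) ((M + 1 : ℕ) : ℤ)
        = insert (-(M + 1 : ℕ) : ℤ)
            (insert ((M + 1 : ℕ) : ℤ) (Finset.Icc (-(M : ℕ) : ℤ) ((M : ℕ) : ℤ))) := by
      ext k
      simp only [Finset.mem_Icc, Finset.mem_insert]
      push_cast
      omega
    have hnm1 : ((M + 1 : ℕ) : ℤ) ∉ insert (-(M + 1 : ℕ) : ℤ)
        (Finset.Icc (-(M : ℕ) : ℤ) ((M : ℕ) : ℤ)) := by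
      simp only [Finset.mem_insert, Finset.mem_Icc]
      push_cast; omega
    have hnm2 : (-(M + 1 : ℕ) : ℤ) ∉
        insert ((M + 1 : ℕ) : ℤ) (Finset.Icc (-(M : ℕ) : ℤ) ((M : ℕ) : ℤ)) := by
      simp only [Finset.mem_insert, Finset.mem_Icc]
      push_cast; omega
    rw [hins, Finset.sum_insert hnm2, Finset.sum_insert
      (by simp only [Finset.mem_Icc]; push_cast; omega), ih]
    have h1 : ((-(M + 1 : ℕ) : ℤ)).natAbs = M + 1 := by omega
    have h2 : (((M + 1 : ℕ) : ℤ)).natAbs = M + 1 := by omega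
    rw [h1, h2]
    field_simp
    ring

lemma TM_le {x : ℝ} (h0 : 0 ≤ x) (h1 : x < 1) (S : Finset ℤ) :
    ∑ k ∈ S, x ^ k.natAbs ≤ (1 + x) / (1 - x) := by
  set M := S.sup (fun k => k.natAbs) with hM
  have hsub : S ⊆ Finset.Icc (-(M : ℤ)) (M : ℤ) := by
    intro k hk
    have h := Finset.le_sup (f := fun k : ℤ => k.natAbs) hk
    have h2 : k.natAbs ≤ M := h
    rw [Finset.mem_Icc]
    omega
  have h1x : (0:ℝ) < 1 - x := by linarith
  calc ∑ k ∈ S, x ^ k.natAbs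
      ≤ ∑ k ∈ Finset.Icc (-(M : ℤ)) (M : ℤ), x ^ k.natAbs :=
        Finset.sum_le_sum_of_subset_of_nonneg hsub (fun i _ _ => by positivity)
    _ = (1 + x) / (1 - x) - 2 * x ^ (M + 1) / (1 - x) := TM (ne_of_lt h1) M
    _ ≤ (1 + x) / (1 - x) := by
        have : 0 ≤ 2 * x ^ (M + 1) / (1 - x) := by positivity
        linarith

lemma gap_eq {x : ℝ} (hx : x ≠ 1) {r : ℕ} (hr : 1 ≤ r) :
    (1 + x) / (1 - x) - ∑ k ∈ Finset.Ioo (-(r : ℤ)) (r : ℤ), x ^ k.natAbs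
      = 2 * x ^ r / (1 - x) := by
  have hIoo : Finset.Ioo (-(r : ℤ)) (r : ℤ)
      = Finset.Icc (-((r - 1 : ℕ) : ℤ)) ((r - 1 : ℕ) : ℤ) := by
    ext k
    simp only [Finset.mem_Ioo, Finset.mem_Icc]
    omega
  rw [hIoo, TM hx]
  have hsucc : r - 1 + 1 = r := Nat.succ_pred_eq_of_pos hr
  rw [hsucc]
  ring

noncomputable def HH (y : ℤ × ℤ) (θ : ℝ × ℝ) : ℝ :=
  (1 - Real.cos (e2 y θ)) * (2 * π / ss (bb θ))

noncomputable def c3 : ℝ := ((2 * π) ^ 3)⁻¹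

lemma c3_pos : 0 < c3 := by unfold c3; positivity

lemma cont_ssbb : Continuous (fun θ : ℝ × ℝ => ss (bb θ)) := by
  unfold ss bb F2
  apply Real.continuous_sqrt.comp
  fun_prop

lemma cont_rrbb : Continuous (fun θ : ℝ × ℝ => rr (bb θ)) := by
  unfold rr
  apply Continuous.sub (by unfold bb F2; fun_prop)
  exact continuous_const.mul cont_ssbb

lemma meas_HH (y : ℤ × ℤ) : Measurable (HH y) := by
  unfold HH
  apply Measurable.mul
  · exact (continuous_const.sub (Real.continuous_cos.comp (continuous_e2 y))).measurable
  · exact Measurable.div measurable_const cont_ssbb.measurable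

lemma HH_nonneg (y : ℤ × ℤ) {θ : ℝ × ℝ} (h : Good θ) : 0 ≤ HH y θ := by
  have hs := ss_pos (bb_pos h)
  have hc := Real.cos_le_one (e2 y θ)
  unfold HH
  apply mul_nonneg (by linarith) (by positivity)

lemma sden_ge {θ : ℝ × ℝ} (h : Good θ) :
    bb θ ≤ ss (bb θ) * (1 - rr (bb θ)) := by
  have hb := bb_pos h
  have hsq := ss_sq hb
  have hρ0 := rr_pos hb
  rw [rr] at hρ0 ⊢
  nlinarith [mul_pos hb hρ0, hsq]

lemma HH_ratio_bound (y : ℤ × ℤ) {θ : ℝ × ℝ} (h : Good θ) :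
    HH y θ * (2 / (1 - rr (bb θ)))
      ≤ 6 * π ^ 3 * (((y.1 : ℝ)) ^ 2 + ((y.2 : ℝ)) ^ 2) := by
  have hb := bb_pos h
  have hs := ss_pos hb
  have hρ1 := rr_lt_one hb
  have h1ρ : (0:ℝ) < 1 - rr (bb θ) := by linarith
  have hden := sden_ge h
  have hcos := one_sub_cos_le y θ
  have hc0 : 0 ≤ 1 - Real.cos (e2 y θ) := by linarith [Real.cos_le_one (e2 y θ)]
  have hθb : θ.1 ^ 2 + θ.2 ^ 2 ≤ 3 * π ^ 2 / 2 * bb θ := by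
    have := bb_lower h; linarith
  have hK0 : (0:ℝ) ≤ ((y.1 : ℝ)) ^ 2 + ((y.2 : ℝ)) ^ 2 := by positivity
  have heq : HH y θ * (2 / (1 - rr (bb θ)))
      = (1 - Real.cos (e2 y θ)) * (4 * π / (ss (bb θ) * (1 - rr (bb θ)))) := by
    unfold HH
    rw [mul_assoc, div_mul_div_comm]
    ring_nf
  rw [heq]
  have hstep1 : (1 - Real.cos (e2 y θ)) * (4 * π / (ss (bb θ) * (1 - rr (bb θ))))
      ≤ (1 - Real.cos (e2 y θ)) * (4 * π / bb θ) := by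
    apply mul_le_mul_of_nonneg_left _ hc0
    apply div_le_div_of_nonneg_left (by positivity) hb hden
  refine hstep1.trans ?_
  rw [mul_div_assoc', div_le_iff₀ hb]
  nlinarith [hcos, hθb, hK0, hc0, Real.pi_pos, mul_le_mul_of_nonneg_left hθb hK0]

noncomputable def dgr (y : ℤ × ℤ) (k : ℤ) : ℝ := green3 ((0 : ℤ × ℤ), k) - green3 (y, k)

lemma integrable_X (w : ℤ × ℤ) (m : ℕ) :
    Integrable (fun θ => Real.cos (e2 w θ) * (2 * π / ss (bb θ) * rr (bb θ) ^ m)) μ2 := by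
  apply integrable_gB.mono'
  · apply Measurable.aestronglyMeasurable
    apply Measurable.mul
    · exact (Real.continuous_cos.comp (continuous_e2 w)).measurable
    · exact ((measurable_const.div cont_ssbb.measurable).mul
        (cont_rrbb.measurable.pow_const m))
  · filter_upwards [ae2_good] with θ hθ
    have hb := bb_pos hθ
    have hs := ss_pos hb
    have hρ0 := rr_pos hb
    have hρ1 := rr_lt_one hb
    have hρm : rr (bb θ) ^ m ≤ 1 := pow_le_one₀ hρ0.le hρ1.le
    rw [Real.norm_eq_abs, abs_mul]
    have h2 : |2 * π / ss (bb θ) * rr (bb θ) ^ m| ≤ 2 * π / ss (bb θ) := by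
      rw [abs_of_nonneg (by positivity)]
      calc 2 * π / ss (bb θ) * rr (bb θ) ^ m ≤ 2 * π / ss (bb θ) * 1 :=
            mul_le_mul_of_nonneg_left hρm (by positivity)
        _ = 2 * π / ss (bb θ) := mul_one _
    calc |Real.cos (e2 w θ)| * |2 * π / ss (bb θ) * rr (bb θ) ^ m|
        ≤ 1 * (2 * π / ss (bb θ)) :=
          mul_le_mul (Real.abs_cos_le_one _) h2 (abs_nonneg _) (by norm_num)
      _ = 2 * π / ss (bb θ) := one_mul _
      _ ≤ 4 * π / ss (bb θ) := by
          have hd : 4 * π / ss (bb θ) - 2 * π / ss (bb θ) = 2 * π / ss (bb θ) := by ring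
          have hnn : 0 ≤ 2 * π / ss (bb θ) := div_nonneg (by positivity) hs.le
          linarith
      _ ≤ gB θ := bound_ss hθ

lemma dgr_eq (y : ℤ × ℤ) (k : ℤ) :
    dgr y k = c3 * ∫ θ, HH y θ * rr (bb θ) ^ k.natAbs ∂μ2 := by
  rw [dgr, (green3_rep 0 k).2, (green3_rep y k).2, ← mul_sub,
    ← integral_sub (integrable_X 0 k.natAbs) (integrable_X y k.natAbs)]
  rw [c3]
  congr 1
  apply integral_congr_ae
  filter_upwards with θ
  show Real.cos (e2 (0 : ℤ × ℤ) θ) * (2 * π / ss (bb θ) * rr (bb θ) ^ k.natAbs)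
      - Real.cos (e2 y θ) * (2 * π / ss (bb θ) * rr (bb θ) ^ k.natAbs)
    = HH y θ * rr (bb θ) ^ k.natAbs
  rw [e2_zero, Real.cos_zero, HH]
  ring

lemma integrable_HH_rho (y : ℤ × ℤ) (m : ℕ) :
    Integrable (fun θ => HH y θ * rr (bb θ) ^ m) μ2 := by
  refine ((integrable_X 0 m).sub (integrable_X y m)).congr ?_
  filter_upwards with θ
  show Real.cos (e2 (0 : ℤ × ℤ) θ) * (2 * π / ss (bb θ) * rr (bb θ) ^ m)
      - Real.cos (e2 y θ) * (2 * π / ss (bb θ) * rr (bb θ) ^ m)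
    = HH y θ * rr (bb θ) ^ m
  rw [e2_zero, Real.cos_zero, HH]
  ring

lemma integrable_HH_ratio (y : ℤ × ℤ) :
    Integrable (fun θ => HH y θ * ((1 + rr (bb θ)) / (1 - rr (bb θ)))) μ2 := by
  refine integrable_bdd ?_ (C := 6 * π ^ 3 * (((y.1 : ℝ)) ^ 2 + ((y.2 : ℝ)) ^ 2)) ?_
  · apply Measurable.aestronglyMeasurable
    exact (meas_HH y).mul ((measurable_const.add cont_rrbb.measurable).div
      (measurable_const.sub cont_rrbb.measurable))
  · filter_upwards [ae2_good] with θ hθ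
    have hb := bb_pos hθ
    have hρ0 := rr_pos hb
    have hρ1 := rr_lt_one hb
    have h1ρ : (0:ℝ) < 1 - rr (bb θ) := by linarith
    have hH := HH_nonneg y hθ
    have hbd := HH_ratio_bound y hθ
    rw [abs_of_nonneg (by positivity)]
    refine le_trans ?_ hbd
    apply mul_le_mul_of_nonneg_left _ hH
    have hd : 2 / (1 - rr (bb θ)) - (1 + rr (bb θ)) / (1 - rr (bb θ))
        = (1 - rr (bb θ)) / (1 - rr (bb θ)) := by ring
    have h1 : (1 - rr (bb θ)) / (1 - rr (bb θ)) = 1 := div_self h1ρ.ne'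
    linarith

lemma integrable_HH_psi (y : ℤ × ℤ) (r : ℕ) :
    Integrable (fun θ => HH y θ * (2 * rr (bb θ) ^ r / (1 - rr (bb θ)))) μ2 := by
  refine integrable_bdd ?_ (C := 6 * π ^ 3 * (((y.1 : ℝ)) ^ 2 + ((y.2 : ℝ)) ^ 2)) ?_
  · apply Measurable.aestronglyMeasurable
    exact (meas_HH y).mul (((measurable_const.mul (cont_rrbb.measurable.pow_const r))).div
      (measurable_const.sub cont_rrbb.measurable))
  · filter_upwards [ae2_good] with θ hθ
    have hb := bb_pos hθ
    have hρ0 := rr_pos hb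
    have hρ1 := rr_lt_one hb
    have h1ρ : (0:ℝ) < 1 - rr (bb θ) := by linarith
    have hH := HH_nonneg y hθ
    have hbd := HH_ratio_bound y hθ
    have hρm : rr (bb θ) ^ r ≤ 1 := pow_le_one₀ hρ0.le hρ1.le
    rw [abs_of_nonneg (by positivity)]
    refine le_trans ?_ hbd
    apply mul_le_mul_of_nonneg_left _ hH
    have hd : 2 / (1 - rr (bb θ)) - 2 * rr (bb θ) ^ r / (1 - rr (bb θ))
        = (2 - 2 * rr (bb θ) ^ r) / (1 - rr (bb θ)) := by ring
    have hnn : 0 ≤ (2 - 2 * rr (bb θ) ^ r) / (1 - rr (bb θ)) :=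
      div_nonneg (by linarith) h1ρ.le
    linarith

end RodAux9

namespace RodAux10
open RodAux RodAux2 RodAux3 RodAux4 RodAux5 RodAux6 RodAux7 RodAux8 RodAux9 Filter

noncomputable def ψy (y : ℤ × ℤ) (r : ℕ) : ℝ :=
  c3 * ∫ θ, HH y θ * (2 * rr (bb θ) ^ r / (1 - rr (bb θ))) ∂μ2

lemma ψ_nonneg (y : ℤ × ℤ) (r : ℕ) : 0 ≤ ψy y r := by
  apply mul_nonneg c3_pos.le
  apply integral_nonneg_of_ae
  filter_upwards [ae2_good] with θ hθ
  have hb := bb_pos hθ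
  have hρ0 := rr_pos hb
  have hρ1 := rr_lt_one hb
  have h1ρ : (0:ℝ) < 1 - rr (bb θ) := by linarith
  exact mul_nonneg (HH_nonneg y hθ) (by positivity)

lemma ψ_tendsto (y : ℤ × ℤ) : Tendsto (ψy y) atTop (nhds 0) := by
  have h0 : (0 : ℝ) = c3 * ∫ θ : ℝ × ℝ, (0:ℝ) ∂μ2 := by simp
  rw [h0]
  unfold ψy
  apply Tendsto.const_mul
  apply tendsto_integral_of_dominated_convergence
    (bound := fun _ => 6 * π ^ 3 * (((y.1 : ℝ)) ^ 2 + ((y.2 : ℝ)) ^ 2))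
  · intro r
    apply Measurable.aestronglyMeasurable
    exact (meas_HH y).mul (((measurable_const.mul (cont_rrbb.measurable.pow_const r))).div
      (measurable_const.sub cont_rrbb.measurable))
  · exact integrable_const _
  · intro r
    filter_upwards [ae2_good] with θ hθ
    have hb := bb_pos hθ
    have hρ0 := rr_pos hb
    have hρ1 := rr_lt_one hb
    have h1ρ : (0:ℝ) < 1 - rr (bb θ) := by linarith
    have hH := HH_nonneg y hθ
    have hbd := HH_ratio_bound y hθ
    have hρm : rr (bb θ) ^ r ≤ 1 := pow_le_one₀ hρ0.le hρ1.le
    rw [Real.norm_eq_abs, abs_of_nonneg (by positivity)]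
    refine le_trans ?_ hbd
    apply mul_le_mul_of_nonneg_left _ hH
    have hd : 2 / (1 - rr (bb θ)) - 2 * rr (bb θ) ^ r / (1 - rr (bb θ))
        = (2 - 2 * rr (bb θ) ^ r) / (1 - rr (bb θ)) := by ring
    have hnn : 0 ≤ (2 - 2 * rr (bb θ) ^ r) / (1 - rr (bb θ)) :=
      div_nonneg (by linarith) h1ρ.le
    linarith
  · filter_upwards [ae2_good] with θ hθ
    have hb := bb_pos hθ
    have hρ0 := rr_pos hb
    have hρ1 := rr_lt_one hb
    have h1ρ : (0:ℝ) < 1 - rr (bb θ) := by linarith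
    have hpow := tendsto_pow_atTop_nhds_zero_of_lt_one hρ0.le hρ1
    have := hpow.const_mul (HH y θ * 2 / (1 - rr (bb θ)))
    rw [mul_zero] at this
    refine this.congr (fun r => ?_)
    field_simp

lemma total_eq (y : ℤ × ℤ) :
    (3 / 2 : ℝ) * aker y
      = c3 * ∫ θ, HH y θ * ((1 + rr (bb θ)) / (1 - rr (bb θ))) ∂μ2 := by
  rw [aker_eq y]
  have hpt : ∀ᵐ θ ∂μ2, HH y θ * ((1 + rr (bb θ)) / (1 - rr (bb θ)))
      = 3 * π * ((1 - Real.cos (e2 y θ)) * (1 - F2 θ)⁻¹) := by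
    filter_upwards [ae2_good] with θ h
    have hb := bb_pos h
    have hs := ss_pos hb
    have hsq := ss_sq hb
    have hlt := lt_ss hb
    have hρ1 := rr_lt_one hb
    have h1ρ : (0:ℝ) < 1 - rr (bb θ) := by linarith
    have hF : 1 - F2 θ = 3 / 2 * bb θ := by unfold bb; ring
    have hkey : (1 + rr (bb θ)) * bb θ = (1 - rr (bb θ)) * ss (bb θ) := by
      rw [rr]
      linear_combination (-3 : ℝ) * hsq
    have hfac : (2 * π / ss (bb θ)) * ((1 + rr (bb θ)) / (1 - rr (bb θ)))
        = 3 * π * (1 - F2 θ)⁻¹ := by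
      rw [hF]
      have hrhs : 3 * π * (3 / 2 * bb θ)⁻¹ = 2 * π / bb θ := by
        field_simp
      rw [hrhs, div_mul_div_comm, div_eq_div_iff (by positivity) hb.ne']
      linear_combination (2 * π) * hkey
    unfold HH
    rw [mul_assoc, hfac]
    ring
  rw [integral_congr_ae hpt, integral_const_mul, c3]
  have hpi := Real.pi_pos
  field_simp

lemma sum_d_eq (y : ℤ × ℤ) (S : Finset ℤ) :
    ∑ k ∈ S, dgr y k
      = c3 * ∫ θ, HH y θ * (∑ k ∈ S, rr (bb θ) ^ k.natAbs) ∂μ2 := by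
  rw [Finset.sum_congr rfl (fun k _ => dgr_eq y k), ← Finset.mul_sum,
    ← integral_finset_sum _ (fun k _ => integrable_HH_rho y k.natAbs)]
  congr 1
  apply integral_congr_ae
  filter_upwards with θ
  rw [Finset.mul_sum]

lemma integrable_HH_sum (y : ℤ × ℤ) (S : Finset ℤ) :
    Integrable (fun θ => HH y θ * (∑ k ∈ S, rr (bb θ) ^ k.natAbs)) μ2 := by
  have h := integrable_finset_sum S (fun k (_ : k ∈ S) => integrable_HH_rho y k.natAbs)
  refine h.congr ?_
  filter_upwards with θ
  rw [Finset.mul_sum]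

lemma sum_d_le (y : ℤ × ℤ) (S : Finset ℤ) :
    ∑ k ∈ S, dgr y k ≤ (3 / 2 : ℝ) * aker y := by
  rw [sum_d_eq, total_eq]
  apply mul_le_mul_of_nonneg_left _ c3_pos.le
  apply integral_mono_ae (integrable_HH_sum y S) (integrable_HH_ratio y)
  filter_upwards [ae2_good] with θ hθ
  have hb := bb_pos hθ
  have hle := TM_le (rr_pos hb).le (rr_lt_one hb) S
  exact mul_le_mul_of_nonneg_left hle (HH_nonneg y hθ)

lemma dgr_nonneg (y : ℤ × ℤ) (k : ℤ) : 0 ≤ dgr y k := by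
  rw [dgr_eq]
  apply mul_nonneg c3_pos.le
  apply integral_nonneg_of_ae
  filter_upwards [ae2_good] with θ hθ
  exact mul_nonneg (HH_nonneg y hθ) (pow_nonneg (rr_pos (bb_pos hθ)).le _)

lemma gap_le_psi (y : ℤ × ℤ) (r : ℕ) (hr : 1 ≤ r) :
    (3 / 2 : ℝ) * aker y - ∑ k ∈ Finset.Ioo (-(r : ℤ)) (r : ℤ), dgr y k ≤ ψy y r := by
  rw [sum_d_eq, total_eq, ψy, ← mul_sub,
    ← integral_sub (integrable_HH_ratio y) (integrable_HH_sum y _)]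
  apply mul_le_mul_of_nonneg_left _ c3_pos.le
  apply integral_mono_ae ((integrable_HH_ratio y).sub (integrable_HH_sum y _))
    (integrable_HH_psi y r)
  filter_upwards [ae2_good] with θ hθ
  have hb := bb_pos hθ
  have hρ1 := rr_lt_one hb
  show HH y θ * ((1 + rr (bb θ)) / (1 - rr (bb θ)))
      - HH y θ * (∑ k ∈ Finset.Ioo (-(r : ℤ)) (r : ℤ), rr (bb θ) ^ k.natAbs)
    ≤ HH y θ * (2 * rr (bb θ) ^ r / (1 - rr (bb θ)))
  rw [← mul_sub, gap_eq (ne_of_lt hρ1) hr]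

end RodAux10


end

/-- For each `y ∈ ℤ²` there is a nonnegative `ψ_y` tending to `0` at infinity such
that for `N > 1` and `z ∈ {1,…,N}`, with `x = (0,z) ∈ J₀`,
`0 ≤ (3/2) a(y) - (∑_{x' ∈ J₀} g(x,x') - ∑_{x'' ∈ J_y} g(x,x'')) ≤ ψ_y(d(z, Jᶜ))`. -/
theorem rod_potential_difference (y : ℤ × ℤ) :
    ∃ ψ : ℕ → ℝ, (∀ r, 0 ≤ ψ r) ∧ Tendsto ψ atTop (nhds 0) ∧
      ∀ N : ℕ, 1 < N → ∀ z ∈ JN N,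
        0 ≤ (3 / 2) * aker y -
            (∑ z' ∈ JN N, green3 ((0 : ℤ × ℤ), z' - z) -
              ∑ z' ∈ JN N, green3 (y, z' - z)) ∧
          (3 / 2) * aker y -
              (∑ z' ∈ JN N, green3 ((0 : ℤ × ℤ), z' - z) -
                ∑ z' ∈ JN N, green3 (y, z' - z)) ≤
            ψ (min z ((N : ℤ) + 1 - z)).toNat := by
  classical
  open RodAux RodAux9 RodAux10 in
  refine ⟨ψy y, ψ_nonneg y, ψ_tendsto y, ?_⟩
  intro N hN z hz
  rw [JN, Finset.mem_Icc] at hz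
  have hre : ∀ w : ℤ × ℤ, ∑ z' ∈ JN N, green3 (w, z' - z)
      = ∑ k ∈ Finset.Icc (1 - z) ((N : ℤ) - z), green3 (w, k) := by
    intro w
    apply Finset.sum_nbij' (fun i => i - z) (fun k => k + z)
    · intro a ha
      rw [JN, Finset.mem_Icc] at ha
      rw [Finset.mem_Icc]
      omega
    · intro a ha
      rw [Finset.mem_Icc] at ha
      rw [JN, Finset.mem_Icc]
      omega
    · intro a _; ring
    · intro a _; ring
    · intro a _; rfl
  have hsplit : ∑ z' ∈ JN N, green3 ((0 : ℤ × ℤ), z' - z)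
        - ∑ z' ∈ JN N, green3 (y, z' - z)
      = ∑ k ∈ Finset.Icc (1 - z) ((N : ℤ) - z), RodAux9.dgr y k := by
    rw [hre 0, hre y, ← Finset.sum_sub_distrib]
    exact Finset.sum_congr rfl (fun k _ => rfl)
  rw [hsplit]
  set R : ℤ := min z ((N : ℤ) + 1 - z) with hRdef
  have hR1 : 1 ≤ R := by omega
  have hRz : R ≤ z := min_le_left _ _
  have hRN : R ≤ (N : ℤ) + 1 - z := min_le_right _ _
  have hrR : ((R.toNat : ℤ)) = R := Int.toNat_of_nonneg (by omega)
  have hr1 : 1 ≤ R.toNat := by omega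
  constructor
  · have h := sum_d_le y (Finset.Icc (1 - z) ((N : ℤ) - z))
    linarith
  · have hsub : Finset.Ioo (-(R.toNat : ℤ)) ((R.toNat : ℤ))
        ⊆ Finset.Icc (1 - z) ((N : ℤ) - z) := by
      intro k hk
      rw [Finset.mem_Ioo] at hk
      rw [Finset.mem_Icc]
      omega
    have hmono : ∑ k ∈ Finset.Ioo (-(R.toNat : ℤ)) ((R.toNat : ℤ)), RodAux9.dgr y k
        ≤ ∑ k ∈ Finset.Icc (1 - z) ((N : ℤ) - z), RodAux9.dgr y k :=
      Finset.sum_le_sum_of_subset_of_nonneg hsub (fun k _ _ => dgr_nonneg y k)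
    have hgap := gap_le_psi y R.toNat hr1
    linarith
end
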